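/- arXiv:1609.01969 — 5 statements merged into one kernel-verified Lean document; each statement's English description precedes it below -/
import Mathlib

section
/- Let G be a finite group and let K be a subgroup of G. Then K is a sol-component of G if and only if K is a nonsolvable subnormal subgroup of G that is minimal among nonsolvable subnormal subgroups of G, i.e. K is subnormal in G, K is not solvable, and every subnormal subgroup of G that is contained in K and is not solvable equals K. -/
open Pointwise

/-- A subgroup `H` of `G` is *subnormal* if there is a finite chain
`H = c 0 ⊴ c 1 ⊴ ⋯ ⊴ c n = G` with each term normal in the next. -/
def IsSubnormal {G : Type*} [Group G] (H : Subgroup G) : Prop :=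
  ∃ (n : ℕ) (c : ℕ → Subgroup G), c 0 = H ∧ c n = ⊤ ∧
    ∀ i < n, c i ≤ c (i + 1) ∧ ((c i).subgroupOf (c (i + 1))).Normal

/-- A group is *quasisimple* if it is perfect and its quotient by its center is simple. -/
def IsQuasisimpleGroup (Q : Type*) [Group Q] : Prop :=
  commutator Q = ⊤ ∧ IsSimpleGroup (Q ⧸ Subgroup.center Q)

/-- A *component* of `G` is a quasisimple subnormal subgroup. -/
def IsComponent {G : Type*} [Group G] (K : Subgroup G) : Prop :=
  IsSubnormal K ∧ IsQuasisimpleGroup ↥K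

/-- The *layer* `E(G)`: the subgroup generated by all components of `G`. -/
def layer (G : Type*) [Group G] : Subgroup G :=
  sSup {K : Subgroup G | IsComponent K}

/-- `Sol(G)`: the join of all solvable normal subgroups of `G`. -/
def solRadical (G : Type*) [Group G] : Subgroup G :=
  sSup {N : Subgroup G | N.Normal ∧ IsSolvable ↥N}

instance solRadical_normal (G : Type*) [Group G] : (solRadical G).Normal := by
  constructor
  intro n hn g
  have h : solRadical G ≤ (solRadical G).comap (MulAut.conj g).toMonoidHom := by
    apply sSup_le
    intro N hN x hx
    have hmem : g * x * g⁻¹ ∈ N := hN.1.conj_mem x hx g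
    exact Subgroup.mem_comap.mpr
      (le_sSup hN (by simpa [MulAut.conj_apply] using hmem))
  simpa [MulAut.conj_apply] using h hn

section Helpers

variable {G : Type*} [Group G]

open scoped commutatorElement

/-- transfer solvability along a MulEquiv -/
lemma solvable_of_mulEquiv {A B : Type*} [Group A] [Group B] (e : A ≃* B)
    (h : IsSolvable A) : IsSolvable B := by
  haveI : Group.IsSolvable A := h
  exact solvable_of_surjective (f := e.toMonoidHom) e.surjective

lemma solvable_subgroup_of_le {A B : Subgroup G} (hAB : A ≤ B) (hB : IsSolvable ↥B) :
    IsSolvable ↥A := by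
  haveI : Group.IsSolvable ↥B := hB
  exact solvable_of_solvable_injective (f := Subgroup.inclusion hAB)
    (Subgroup.inclusion_injective hAB)

lemma solvable_subgroupOf_of_solvable {A B : Subgroup G} (hA : IsSolvable ↥A) :
    IsSolvable ↥(A.subgroupOf B) := by
  have e := Subgroup.equivMapOfInjective (A.subgroupOf B) B.subtype B.subtype_injective
  rw [Subgroup.subgroupOf_map_subtype] at e
  exact solvable_of_mulEquiv e.symm (solvable_subgroup_of_le inf_le_left hA)

lemma solvable_map_iff {H : Type*} [Group H] (f : G →* H) (hf : Function.Injective f)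
    (A : Subgroup G) : IsSolvable ↥(A.map f) ↔ IsSolvable ↥A := by
  constructor
  · intro h
    exact solvable_of_mulEquiv (Subgroup.equivMapOfInjective A f hf).symm h
  · intro h
    exact solvable_of_mulEquiv (Subgroup.equivMapOfInjective A f hf) h


/-- elementwise constructor for normality of `subgroupOf` -/
lemma normal_subgroupOf_of_conj {A B : Subgroup G}
    (h : ∀ x ∈ A, ∀ g ∈ B, g * x * g⁻¹ ∈ A) : (A.subgroupOf B).Normal := by
  constructor
  rintro ⟨x, hxB⟩ hx ⟨g, hgB⟩
  simp only [Subgroup.mem_subgroupOf] at hx ⊢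
  exact h x hx g hgB

lemma conj_mem_of_normal_subgroupOf {A B : Subgroup G} (hAB : A ≤ B)
    (hn : (A.subgroupOf B).Normal) : ∀ x ∈ A, ∀ g ∈ B, g * x * g⁻¹ ∈ A := by
  intro x hx g hg
  have := hn.conj_mem ⟨x, hAB hx⟩ (by simpa [Subgroup.mem_subgroupOf] using hx) ⟨g, hg⟩
  simpa [Subgroup.mem_subgroupOf] using this

/-- Prepend: a normal subgroup of a subnormal subgroup is subnormal. -/
lemma IsSubnormal.of_normal_of_le {H K : Subgroup G} (hHK : H ≤ K)
    (hn : (H.subgroupOf K).Normal) (hK : IsSubnormal K) : IsSubnormal H := by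
  obtain ⟨n, c, hc0, hcn, hstep⟩ := hK
  refine ⟨n + 1, fun i => Nat.rec H (fun i _ => c i) i, rfl, hcn, ?_⟩
  intro i hi
  match i with
  | 0 =>
    refine ⟨?_, ?_⟩
    · show H ≤ c 0
      rw [hc0]; exact hHK
    · show (H.subgroupOf (c 0)).Normal
      rw [hc0]; exact hn
  | (j+1) => exact hstep j (by omega)

/-- A subnormal subgroup is subnormal in any intermediate subgroup. -/
lemma IsSubnormal.subgroupOf {S K : Subgroup G} (hS : IsSubnormal S) (hSK : S ≤ K) :
    IsSubnormal (S.subgroupOf K) := by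
  obtain ⟨n, c, hc0, hcn, hstep⟩ := hS
  refine ⟨n, fun i => (c i).subgroupOf K, by simp only [hc0], by simp only [hcn]; exact Subgroup.comap_top _, ?_⟩
  intro i hi
  obtain ⟨hle, hnorm⟩ := hstep i hi
  constructor
  · exact Subgroup.comap_mono hle
  · apply normal_subgroupOf_of_conj
    rintro ⟨x, hxK⟩ hx ⟨g, hgK⟩ hg
    simp only [Subgroup.mem_subgroupOf] at hx hg ⊢
    exact conj_mem_of_normal_subgroupOf hle hnorm x hx g hg

/-- Image of a subnormal subgroup under a surjective hom is subnormal. -/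
lemma IsSubnormal.map {H : Type*} [Group H] {K : Subgroup G} (hK : IsSubnormal K)
    (f : G →* H) (hf : Function.Surjective f) : IsSubnormal (K.map f) := by
  obtain ⟨n, c, hc0, hcn, hstep⟩ := hK
  refine ⟨n, fun i => (c i).map f, by simp only [hc0], by simp only [hcn]; exact Subgroup.map_top_of_surjective f hf, ?_⟩
  intro i hi
  obtain ⟨hle, hnorm⟩ := hstep i hi
  refine ⟨Subgroup.map_mono hle, normal_subgroupOf_of_conj ?_⟩
  rintro x hx g hg
  obtain ⟨a, ha, rfl⟩ := hx
  obtain ⟨b, hb, rfl⟩ := hg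
  refine ⟨b * a * b⁻¹, conj_mem_of_normal_subgroupOf hle hnorm a ha b hb, by simp⟩


lemma perfect_of_surjective {A B : Type*} [Group A] [Group B] (f : A →* B)
    (hf : Function.Surjective f) (hA : commutator A = ⊤) : commutator B = ⊤ := by
  rw [commutator_def, ← Subgroup.map_top_of_surjective f hf, ← Subgroup.map_commutator,
    ← commutator_def, hA, Subgroup.map_top_of_surjective f hf]

lemma subsingleton_of_perfect_solvable {A : Type*} [Group A]
    (hA : commutator A = ⊤) (hs : IsSolvable A) : Subsingleton A := by
  have hd : ∀ n, derivedSeries A n = ⊤ := by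
    intro n
    induction n with
    | zero => rfl
    | succ n ih => rw [derivedSeries_succ, ih, ← commutator_def, hA]
  obtain ⟨n, hn⟩ := hs
  have : (⊤ : Subgroup A) = ⊥ := hd n ▸ hn
  refine subsingleton_of_forall_eq 1 fun y => ?_
  have : y ∈ (⊥ : Subgroup A) := this ▸ Subgroup.mem_top y
  simpa using this

lemma not_solvable_of_perfect_nontrivial {A : Type*} [Group A]
    (hA : commutator A = ⊤) (hnt : Nontrivial A) : ¬ IsSolvable A := fun hs =>
  not_subsingleton A (subsingleton_of_perfect_solvable hA hs)

lemma map_subtype_commutator (K : Subgroup G) :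
    (commutator ↥K).map K.subtype = ⁅K, K⁆ := by
  rw [commutator_def, Subgroup.map_commutator]
  congr 1 <;>
  · rw [← Subgroup.top_subgroupOf K, Subgroup.subgroupOf_map_subtype, top_inf_eq]

lemma commutator_subgroup_le_self (K : Subgroup G) : ⁅K, K⁆ ≤ K :=
  Subgroup.commutator_le.mpr fun a ha b hb =>
    K.mul_mem (K.mul_mem (K.mul_mem ha hb) (K.inv_mem ha)) (K.inv_mem hb)

lemma commutator_subgroup_normal_in_self (K : Subgroup G) :
    ∀ x ∈ ⁅K, K⁆, ∀ g ∈ K, g * x * g⁻¹ ∈ ⁅K, K⁆ := by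
  intro x hx g hg
  have key : ⁅K, K⁆ ≤ (⁅K, K⁆).comap (MulAut.conj g).toMonoidHom := by
    rw [Subgroup.commutator_le]
    intro a ha b hb
    rw [Subgroup.mem_comap]
    have : (MulAut.conj g).toMonoidHom ⁅a, b⁆ = ⁅g * a * g⁻¹, g * b * g⁻¹⁆ := by
      simp [map_commutatorElement]
    rw [this]
    exact Subgroup.commutator_mem_commutator
      (K.mul_mem (K.mul_mem hg ha) (K.inv_mem hg)) (K.mul_mem (K.mul_mem hg hb) (K.inv_mem hg))
  have := key hx
  simpa [Subgroup.mem_comap] using this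

lemma perfect_of_commutator_eq_self {K : Subgroup G} (h : ⁅K, K⁆ = K) :
    commutator ↥K = ⊤ := by
  have hinj := Subgroup.map_injective (f := K.subtype) K.subtype_injective
  apply hinj
  rw [map_subtype_commutator, h, ← Subgroup.top_subgroupOf K, Subgroup.subgroupOf_map_subtype,
    top_inf_eq]

lemma solvable_of_commutator_solvable {K : Subgroup G} (h : IsSolvable ↥(⁅K, K⁆ : Subgroup G)) :
    IsSolvable ↥K := by
  haveI : Group.IsSolvable ↥(commutator ↥K) := by
    have e := Subgroup.equivMapOfInjective (commutator ↥K) K.subtype K.subtype_injective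
    rw [map_subtype_commutator] at e
    haveI : Group.IsSolvable ↥(⁅K, K⁆ : Subgroup G) := h
    exact solvable_of_solvable_injective (f := e.toMonoidHom) e.injective
  haveI : Group.IsSolvable (↥K ⧸ commutator ↥K) := inferInstanceAs (Group.IsSolvable (Abelianization ↥K))
  exact solvable_of_ker_le_range (commutator ↥K).subtype (QuotientGroup.mk' (commutator ↥K))
    (by rw [QuotientGroup.ker_mk', Subgroup.range_subtype])


/-- the join of two solvable normal subgroups is solvable -/
lemma sup_solvable_normal {N M : Subgroup G} (hN : N.Normal) (hM : M.Normal)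
    (hNs : IsSolvable ↥N) (hMs : IsSolvable ↥M) : IsSolvable ↥(N ⊔ M) := by
  set H := N ⊔ M with hH
  haveI : (M.subgroupOf H).Normal := by
    constructor
    rintro ⟨x, hxH⟩ hx ⟨g, hgH⟩
    simp only [Subgroup.mem_subgroupOf] at hx ⊢
    exact hM.conj_mem x hx g
  haveI hsolv : Group.IsSolvable ↥(M.subgroupOf H) := solvable_subgroupOf_of_solvable hMs
  haveI : Group.IsSolvable (↥H ⧸ M.subgroupOf H) := by
    haveI : Group.IsSolvable ↥N := hNs
    refine solvable_of_surjective
      (f := (QuotientGroup.mk' (M.subgroupOf H)).comp (Subgroup.inclusion le_sup_left)) ?_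
    intro q
    induction q using QuotientGroup.induction_on with
    | H h =>
      have hmem : (h : G) ∈ (↑N * ↑M : Set G) := by
        rw [← Subgroup.mul_normal N M]
        exact h.2
      obtain ⟨n, hn, m, hm, hnm⟩ := hmem
      refine ⟨⟨n, hn⟩, ?_⟩
      simp only [MonoidHom.comp_apply, QuotientGroup.mk'_apply]
      rw [QuotientGroup.eq]
      rw [Subgroup.mem_subgroupOf]
      have hcoe : (((Subgroup.inclusion (le_sup_left : N ≤ H)) ⟨n, hn⟩ : ↥H) : G) = n := rfl
      rw [Subgroup.coe_mul, Subgroup.coe_inv, hcoe]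
      have hm' : n⁻¹ * (h : G) = m := by rw [← hnm]; group
      rw [hm']
      exact hm
  exact solvable_of_ker_le_range (M.subgroupOf H).subtype (QuotientGroup.mk' (M.subgroupOf H))
    (by rw [QuotientGroup.ker_mk', Subgroup.range_subtype])

lemma solRadical_solvable (G : Type*) [Group G] [Finite G] : IsSolvable ↥(solRadical G) := by
  classical
  set s := {N : Subgroup G | N.Normal ∧ IsSolvable ↥N} with hs
  have hfin : s.Finite := Set.toFinite s
  have hne : s.Nonempty := ⟨⊥, inferInstance, (inferInstance : Group.IsSolvable _)⟩
  obtain ⟨m, hm, hmax⟩ := Set.Finite.exists_maximalFor id s hfin hne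
  have : sSup s = m := by
    refine le_antisymm (sSup_le fun N hN => ?_) (le_sSup hm)
    have hsup : N ⊔ m ∈ s := by
      refine ⟨?_, sup_solvable_normal hN.1 hm.1 hN.2 hm.2⟩
      haveI := hN.1; haveI := hm.1
      infer_instance
    have := hmax hsup le_sup_right
    simp only [id] at this
    exact le_sup_left.trans this
  rw [solRadical, ← hs, this]
  exact hm.2


/-- Auxiliary: a solvable subgroup that is normal in a term of a subnormal chain
lies in the solvable radical. -/
lemma le_solRadical_aux {G : Type*} [Group G] [Finite G] :
    ∀ n (H : Subgroup G) (c : ℕ → Subgroup G), c 0 = H → c n = ⊤ →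
      (∀ i < n, c i ≤ c (i + 1) ∧ ((c i).subgroupOf (c (i + 1))).Normal) →
      ∀ S : Subgroup G, S ≤ H → (S.subgroupOf H).Normal → IsSolvable ↥S →
        S ≤ solRadical G := by
  intro n
  induction n with
  | zero =>
    intro H c hc0 hcn _ S hSH hSn hSs
    have hH : H = ⊤ := by rw [← hc0, hcn]
    subst hH
    have : S.Normal := by
      constructor
      intro x hx g
      exact conj_mem_of_normal_subgroupOf hSH hSn x hx g (Subgroup.mem_top g)
    exact le_sSup ⟨this, hSs⟩
  | succ n ih =>
    intro H c hc0 hcn hstep S hSH hSn hSs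
    obtain ⟨hle, hnorm⟩ := hstep 0 (Nat.succ_pos n)
    rw [hc0] at hle hnorm
    set B := c 1 with hB
    set M := (solRadical ↥H).map H.subtype with hM
    have hMH : M ≤ H := Subgroup.map_subtype_le _
    have hSM : S ≤ M := by
      intro x hx
      have hx' : (⟨x, hSH hx⟩ : ↥H) ∈ solRadical ↥H := by
        apply le_sSup (s := {N : Subgroup ↥H | N.Normal ∧ IsSolvable ↥N})
          (show S.subgroupOf H ∈ _ from ⟨hSn, solvable_subgroupOf_of_solvable hSs⟩)
        simpa [Subgroup.mem_subgroupOf] using hx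
      exact ⟨⟨x, hSH hx⟩, hx', rfl⟩
    have hMs : IsSolvable ↥M :=
      solvable_of_mulEquiv (Subgroup.equivMapOfInjective _ H.subtype H.subtype_injective)
        (solRadical_solvable ↥H)
    -- M is normal in B
    have hMB : ∀ x ∈ M, ∀ g ∈ B, g * x * g⁻¹ ∈ M := by
      intro x hx g hg
      have hconjH : ∀ y ∈ H, g * y * g⁻¹ ∈ H := fun y hy =>
        conj_mem_of_normal_subgroupOf hle hnorm y hy g hg
      have hconjH' : ∀ y ∈ H, g⁻¹ * y * g ∈ H := by
        intro y hy
        have := conj_mem_of_normal_subgroupOf hle hnorm y hy g⁻¹ (B.inv_mem hg)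
        simpa using this
      let φ : ↥H ≃* ↥H :=
        { toFun := fun y => ⟨g * y * g⁻¹, hconjH y y.2⟩
          invFun := fun y => ⟨g⁻¹ * y * g, hconjH' y y.2⟩
          left_inv := fun y => by ext; simp [mul_assoc]
          right_inv := fun y => by ext; simp [mul_assoc]
          map_mul' := fun y z => by ext; simp [mul_assoc] }
      obtain ⟨y, hy, rfl⟩ := hx
      refine ⟨φ y, ?_, rfl⟩
      -- φ maps the solvable radical into itself
      have hmap : (solRadical ↥H).map φ.toMonoidHom ≤ solRadical ↥H := by
        rw [solRadical, (Subgroup.gc_map_comap φ.toMonoidHom).l_sSup]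
        refine iSup₂_le fun N hN => le_sSup ?_
        refine ⟨hN.1.map φ.toMonoidHom φ.surjective, ?_⟩
        exact solvable_of_mulEquiv (Subgroup.equivMapOfInjective _ _ φ.injective) hN.2
      exact hmap ⟨y, hy, rfl⟩
    -- conclude by the inductive hypothesis applied to the chain starting at B
    refine le_trans hSM (ih B (fun i => c (i + 1)) rfl hcn
      (fun i _hi => hstep (i + 1) (by omega)) M ?_ ?_ hMs)
    · exact le_trans hMH hle
    · exact normal_subgroupOf_of_conj hMB

lemma solvable_subnormal_le_solRadical {G : Type*} [Group G] [Finite G] {S : Subgroup G}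
    (h : IsSubnormal S) (hs : IsSolvable ↥S) : S ≤ solRadical G := by
  obtain ⟨n, c, hc0, hcn, hstep⟩ := h
  refine le_solRadical_aux n S c hc0 hcn hstep S le_rfl ?_ hs
  rw [Subgroup.subgroupOf_self]
  infer_instance

lemma IsQuasisimpleGroup.normal_dichotomy {Q : Type*} [Group Q] (hQ : IsQuasisimpleGroup Q)
    (N : Subgroup Q) (hN : N.Normal) : N = ⊤ ∨ N ≤ Subgroup.center Q := by
  obtain ⟨hperf, hsimple⟩ := hQ
  set m := QuotientGroup.mk' (Subgroup.center Q) with hm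
  have hmap : (N.map m).Normal := hN.map m (QuotientGroup.mk'_surjective _)
  rcases hsimple.eq_bot_or_eq_top_of_normal (N.map m) hmap with hbot | htop
  · right
    intro x hx
    have : m x ∈ N.map m := ⟨x, hx, rfl⟩
    rw [hbot, Subgroup.mem_bot] at this
    have : x ∈ m.ker := this
    rwa [QuotientGroup.ker_mk'] at this
  · left
    refine le_antisymm le_top ?_
    rw [← hperf, commutator_def, Subgroup.commutator_le]
    intro g _ h _
    have hg : m g ∈ N.map m := by rw [htop]; exact Subgroup.mem_top _
    obtain ⟨n₁, hn₁, hn₁g⟩ := hg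
    have hz₁ : n₁⁻¹ * g ∈ Subgroup.center Q := by
      have : n₁⁻¹ * g ∈ m.ker := by
        rw [MonoidHom.mem_ker, map_mul, map_inv, hn₁g]
        group
      rwa [QuotientGroup.ker_mk'] at this
    have hzc : ∀ x : Q, x * (n₁⁻¹ * g) = (n₁⁻¹ * g) * x :=
      fun x => Subgroup.mem_center_iff.mp hz₁ x
    have hgh : ⁅g, h⁆ = n₁ * (h * n₁⁻¹ * h⁻¹) := by
      have hge : g = n₁ * (n₁⁻¹ * g) := by group
      have hzh : (n₁⁻¹ * g) * h * (n₁⁻¹ * g)⁻¹ = h := by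
        rw [← hzc h]
        group
      calc ⁅g, h⁆ = g * h * g⁻¹ * h⁻¹ := commutatorElement_def g h
        _ = (n₁ * (n₁⁻¹ * g)) * h * (n₁ * (n₁⁻¹ * g))⁻¹ * h⁻¹ := by rw [← hge]
        _ = n₁ * ((n₁⁻¹ * g) * h * (n₁⁻¹ * g)⁻¹) * n₁⁻¹ * h⁻¹ := by group
        _ = n₁ * h * n₁⁻¹ * h⁻¹ := by rw [hzh]
        _ = n₁ * (h * n₁⁻¹ * h⁻¹) := by group
    rw [hgh]
    exact N.mul_mem hn₁ (hN.conj_mem _ (N.inv_mem hn₁) h)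

lemma IsQuasisimpleGroup.subnormal_dichotomy {Q : Type*} [Group Q] (hQ : IsQuasisimpleGroup Q)
    {T : Subgroup Q} (hT : IsSubnormal T) : T = ⊤ ∨ T ≤ Subgroup.center Q := by
  obtain ⟨n, d, hd0, hdn, hstep⟩ := hT
  have key : ∀ i, d (n - i) = ⊤ ∨ d (n - i) ≤ Subgroup.center Q := by
    intro i
    induction i with
    | zero => left; simpa using hdn
    | succ i ih =>
      by_cases hin : i < n
      · have hj : n - i = (n - (i + 1)) + 1 := by omega
        rcases ih with htop | hc
        · obtain ⟨hle, hnorm⟩ := hstep (n - (i + 1)) (by omega)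
          rw [← hj, htop] at hle hnorm
          have : (d (n - (i + 1))).Normal := by
            constructor
            intro x hx g
            exact conj_mem_of_normal_subgroupOf hle hnorm x hx g (Subgroup.mem_top g)
          exact hQ.normal_dichotomy _ this
        · right
          obtain ⟨hle, _⟩ := hstep (n - (i + 1)) (by omega)
          rw [← hj] at hle
          exact le_trans hle hc
      · have : n - (i + 1) = n - i := by omega
        rw [this]
        exact ih
  have := key n
  rwa [Nat.sub_self, hd0] at this

lemma isSimpleGroup_of_mulEquiv {A B : Type*} [Group A] [Group B] (e : A ≃* B)
    (h : IsSimpleGroup A) : IsSimpleGroup B := by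
  haveI : Nontrivial B := Equiv.nontrivial e.symm.toEquiv
  constructor
  intro N hN
  have hc : (N.comap e.toMonoidHom).Normal := Subgroup.Normal.comap hN _
  have hmc : (N.comap e.toMonoidHom).map e.toMonoidHom = N :=
    Subgroup.map_comap_eq_self_of_surjective e.surjective N
  rcases h.eq_bot_or_eq_top_of_normal _ hc with hb | ht
  · left
    rw [← hmc, hb, Subgroup.map_bot]
  · right
    rw [← hmc, ht, Subgroup.map_top_of_surjective _ e.surjective]

/-- If the kernel and the image of a subgroup under `f` are solvable, so is the subgroup. -/
lemma solvable_of_map_solvable {G H : Type*} [Group G] [Group H] (f : G →* H) (A : Subgroup G)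
    (hker : IsSolvable ↥f.ker) (him : IsSolvable ↥(A.map f)) : IsSolvable ↥A := by
  haveI : Group.IsSolvable ↥(f.ker.subgroupOf A) := solvable_subgroupOf_of_solvable hker
  haveI : Group.IsSolvable ↥(A.map f) := him
  refine solvable_of_ker_le_range (f.ker.subgroupOf A).subtype (f.subgroupMap A) ?_
  intro x hx
  rw [Subgroup.range_subtype]
  rw [MonoidHom.mem_ker] at hx
  have : f (x : G) = 1 := congrArg Subtype.val hx
  exact Subgroup.mem_subgroupOf.mpr this

lemma fin_aux {X : Type*} [Group X] (hperf : commutator X = ⊤) (N : Subgroup X)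
    (hN : N.Normal) (hNs : IsSolvable ↥N) :
    ∀ n (c : ℕ → Subgroup X), c n = ⊤ →
      (∀ i < n, c i ≤ c (i + 1) ∧ ((c i).subgroupOf (c (i + 1))).Normal) →
      c 0 ⊔ N = ⊤ → c 0 = ⊤ := by
  intro n
  induction n with
  | zero => intro c hcn _ _; exact hcn
  | succ n ih =>
    intro c hcn hstep hTN
    obtain ⟨hle, hnorm⟩ := hstep 0 (Nat.succ_pos n)
    have hB : c 1 = ⊤ := by
      refine ih (fun i => c (i + 1)) hcn (fun i hi => hstep (i + 1) (by omega)) ?_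
      refine le_antisymm le_top ?_
      rw [← hTN]
      exact sup_le_sup_right hle N
    rw [hB] at hle hnorm
    haveI hTnormal : (c 0).Normal := by
      constructor
      intro x hx g
      exact conj_mem_of_normal_subgroupOf hle hnorm x hx g (Subgroup.mem_top g)
    haveI : Group.IsSolvable ↥N := hNs
    have hsurj : Function.Surjective ((QuotientGroup.mk' (c 0)).comp N.subtype) := by
      intro q
      induction q using QuotientGroup.induction_on with
      | H x =>
        have hx : x ∈ (↑(c 0) * ↑N : Set X) := by
          rw [← Subgroup.mul_normal (c 0) N, hTN]
          trivial
        obtain ⟨t, ht, m, hm, htm⟩ := hx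
        refine ⟨⟨m, hm⟩, ?_⟩
        simp only [MonoidHom.comp_apply, QuotientGroup.mk'_apply, Subgroup.coe_subtype]
        rw [QuotientGroup.eq]
        have : m⁻¹ * x = m⁻¹ * t * m := by rw [← htm]; group
        rw [this]
        exact hTnormal.conj_mem' t ht m
    haveI : Group.IsSolvable (X ⧸ c 0) := solvable_of_surjective hsurj
    have hsub : Subsingleton (X ⧸ c 0) :=
      subsingleton_of_perfect_solvable
        (perfect_of_surjective (QuotientGroup.mk' (c 0))
          (QuotientGroup.mk'_surjective _) hperf) this
    refine le_antisymm le_top fun x _ => ?_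
    have : (x : X ⧸ c 0) = ((1 : X) : X ⧸ c 0) := Subsingleton.elim _ _
    rw [QuotientGroup.mk_one] at this
    exact (QuotientGroup.eq_one_iff x).mp this

/-- In a perfect group, a subnormal subgroup whose join with a solvable normal subgroup is
everything must be everything. -/
lemma eq_top_of_subnormal_sup_solvable {X : Type*} [Group X] (hperf : commutator X = ⊤)
    {N : Subgroup X} (hN : N.Normal) (hNs : IsSolvable ↥N) {T : Subgroup X}
    (hT : IsSubnormal T) (hTN : T ⊔ N = ⊤) : T = ⊤ := by
  obtain ⟨n, c, hc0, hcn, hstep⟩ := hT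
  rw [← hc0]
  exact fin_aux hperf N hN hNs n c hcn hstep (by rw [hc0]; exact hTN)

end Helpers

/-- A *sol-component* of `G` is a perfect subnormal subgroup of `G` whose image in
`G/Sol(G)` is a component of `G/Sol(G)`. -/
def IsSolComponent {G : Type*} [Group G] (K : Subgroup G) : Prop :=
  IsSubnormal K ∧ commutator ↥K = ⊤ ∧
    IsComponent (K.map (QuotientGroup.mk' (solRadical G)))

/-- `E_sol(G)`: the subgroup generated by all sol-components of `G`. -/
def solLayer (G : Type*) [Group G] : Subgroup G :=
  sSup {K : Subgroup G | IsSolComponent K}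

/-- `K` is a sol-component of `G` iff `K` is a minimal
nonsolvable subnormal subgroup of `G`. -/
theorem solComponent_iff_minimal_nonsolvable_subnormal
    {G : Type*} [Group G] [Finite G] (K : Subgroup G) :
    IsSolComponent K ↔
      IsSubnormal K ∧ ¬ IsSolvable ↥K ∧
        ∀ S : Subgroup G, IsSubnormal S → S ≤ K → ¬ IsSolvable ↥S → S = K := by
  set R := solRadical G with hR
  set π := QuotientGroup.mk' R with hπdef
  have hπ : Function.Surjective π := QuotientGroup.mk'_surjective R
  have hRs : IsSolvable ↥R := solRadical_solvable G
  have hkerπ : π.ker = R := QuotientGroup.ker_mk' R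
  constructor
  · rintro ⟨hKsub, hKperf, hKmapSub, hKmapQS⟩
    have hQnt : Nontrivial ↥(K.map π) := by
      by_contra h
      haveI : Subsingleton ↥(K.map π) := not_nontrivial_iff_subsingleton.mp h
      haveI : Subsingleton (↥(K.map π) ⧸ Subgroup.center ↥(K.map π)) :=
        (QuotientGroup.mk'_surjective (Subgroup.center ↥(K.map π))).subsingleton
      haveI := hKmapQS.2
      exact absurd ‹Subsingleton _› (not_subsingleton _)
    have hKns : ¬ IsSolvable ↥K := by
      intro hs
      haveI : Group.IsSolvable ↥K := hs
      have hQs : IsSolvable ↥(K.map π) :=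
        solvable_of_surjective (f := π.subgroupMap K) (π.subgroupMap_surjective K)
      have hQperf : commutator ↥(K.map π) = ⊤ :=
        perfect_of_surjective (π.subgroupMap K) (π.subgroupMap_surjective K) hKperf
      exact not_solvable_of_perfect_nontrivial hQperf hQnt hQs
    refine ⟨hKsub, hKns, ?_⟩
    intro S hSsub hSK hSns
    have hSmsub : IsSubnormal (S.map π) := hSsub.map π hπ
    have hSmle : S.map π ≤ K.map π := Subgroup.map_mono hSK
    have hTsub : IsSubnormal ((S.map π).subgroupOf (K.map π)) := hSmsub.subgroupOf hSmle
    rcases hKmapQS.subnormal_dichotomy hTsub with htop | hcen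
    · -- the image of S is all of the image of K
      have hmapeq : K.map π ≤ S.map π := Subgroup.subgroupOf_eq_top.mp htop
      set T := S.subgroupOf K with hT
      set Nk := R.subgroupOf K with hNk
      have hNknormal : Nk.Normal := by
        apply normal_subgroupOf_of_conj
        intro x hx g _
        exact (solRadical_normal G).conj_mem x hx g
      have hNks : IsSolvable ↥Nk := solvable_subgroupOf_of_solvable hRs
      have hTs : IsSubnormal T := hSsub.subgroupOf hSK
      have hsup : T ⊔ Nk = ⊤ := by
        refine le_antisymm le_top fun x _ => ?_
        have hx : π (x : G) ∈ S.map π := hmapeq ⟨(x : G), x.2, rfl⟩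
        obtain ⟨s, hs, hsx⟩ := hx
        have hsK : s ∈ K := hSK hs
        have hr : s⁻¹ * (x : G) ∈ R := by
          rw [← hkerπ, MonoidHom.mem_ker, map_mul, map_inv, hsx]
          group
        have hxeq : x = (⟨s, hsK⟩ : ↥K) * ⟨s⁻¹ * (x : G), K.mul_mem (K.inv_mem hsK) x.2⟩ := by
          ext
          simp [mul_assoc]
        rw [hxeq]
        exact Subgroup.mul_mem _
          (le_sup_left (a := T) (b := Nk) (Subgroup.mem_subgroupOf.mpr hs))
          (le_sup_right (a := T) (b := Nk) (Subgroup.mem_subgroupOf.mpr hr))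
      have hTtop : T = ⊤ := eq_top_of_subnormal_sup_solvable hKperf hNknormal hNks hTs hsup
      exact le_antisymm hSK (Subgroup.subgroupOf_eq_top.mp hTtop)
    · -- the image of S is central, hence S is solvable: contradiction
      exfalso
      apply hSns
      have hcomm : IsSolvable ↥((S.map π).subgroupOf (K.map π)) := by
        apply isSolvable_of_comm
        intro a b
        have := Subgroup.mem_center_iff.mp (hcen a.2) (b : ↥(K.map π))
        ext
        exact congrArg Subtype.val this.symm
      have hSms : IsSolvable ↥(S.map π) :=
        solvable_of_mulEquiv (Subgroup.subgroupOfEquivOfLe hSmle) hcomm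
      exact solvable_of_map_solvable π S (by rw [hkerπ]; exact hRs) hSms
  · rintro ⟨hKsub, hKns, hmin⟩
    -- K is perfect
    have hC_le : ⁅K, K⁆ ≤ K := commutator_subgroup_le_self K
    have hC_norm : ((⁅K, K⁆ : Subgroup G).subgroupOf K).Normal :=
      normal_subgroupOf_of_conj (commutator_subgroup_normal_in_self K)
    have hC_sub : IsSubnormal (⁅K, K⁆ : Subgroup G) :=
      IsSubnormal.of_normal_of_le hC_le hC_norm hKsub
    have hC_ns : ¬ IsSolvable ↥(⁅K, K⁆ : Subgroup G) := fun h =>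
      hKns (solvable_of_commutator_solvable h)
    have hKperf : commutator ↥K = ⊤ :=
      perfect_of_commutator_eq_self (hmin _ hC_sub hC_le hC_ns)
    -- every normal subgroup of the image of K is ⊥ or ⊤
    have claimC : ∀ Nb : Subgroup ↥(K.map π), Nb.Normal → Nb = ⊥ ∨ Nb = ⊤ := by
      intro Nb hNb
      set N' := Nb.map (K.map π).subtype with hN'
      have hN'le : N' ≤ K.map π := Subgroup.map_subtype_le Nb
      have hN'conj : ∀ u ∈ N', ∀ v ∈ K.map π, v * u * v⁻¹ ∈ N' := by
        rintro u ⟨ub, hub, rfl⟩ v hv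
        refine ⟨(⟨v, hv⟩ : ↥(K.map π)) * ub * (⟨v, hv⟩ : ↥(K.map π))⁻¹,
          hNb.conj_mem ub hub ⟨v, hv⟩, rfl⟩
      set N := (N'.comap π) ⊓ K with hNdef
      have hNK : N ≤ K := inf_le_right
      have hNnorm : (N.subgroupOf K).Normal := by
        apply normal_subgroupOf_of_conj
        intro x hx g hg
        rw [hNdef, Subgroup.mem_inf] at hx ⊢
        obtain ⟨hx1, hx2⟩ := hx
        refine ⟨?_, K.mul_mem (K.mul_mem hg hx2) (K.inv_mem hg)⟩
        rw [Subgroup.mem_comap] at hx1 ⊢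
        rw [map_mul, map_mul, map_inv]
        exact hN'conj (π x) hx1 (π g) ⟨g, hg, rfl⟩
      have hNsub : IsSubnormal N := IsSubnormal.of_normal_of_le hNK hNnorm hKsub
      have hNmap : N.map π = N' := by
        refine le_antisymm ?_ ?_
        · rintro _ ⟨x, ⟨hx1, _⟩, rfl⟩
          exact hx1
        · intro u hu
          obtain ⟨k, hk, rfl⟩ := hN'le hu
          exact ⟨k, ⟨hu, hk⟩, rfl⟩
      by_cases hNsolv : IsSolvable ↥N
      · left
        have hNR : N ≤ R := solvable_subnormal_le_solRadical hNsub hNsolv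
        have hN'bot : N' = ⊥ := by
          rw [← hNmap]
          refine le_antisymm ?_ bot_le
          rintro _ ⟨x, hx, rfl⟩
          rw [Subgroup.mem_bot]
          rw [hπdef]
          exact (QuotientGroup.eq_one_iff x).mpr (hNR hx)
        rw [eq_bot_iff]
        intro xb hxb
        rw [Subgroup.mem_bot]
        have : (xb : G ⧸ R) ∈ N' := ⟨xb, hxb, rfl⟩
        rw [hN'bot, Subgroup.mem_bot] at this
        exact Subtype.ext this
      · right
        have hNeq : N = K := hmin N hNsub hNK hNsolv
        rw [eq_top_iff]
        intro xb _
        have hx : (xb : G ⧸ R) ∈ N' := by rw [← hNmap, hNeq]; exact xb.2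
        obtain ⟨yb, hyb, hyx⟩ := hx
        rwa [show xb = yb from Subtype.ext hyx.symm]
    -- the image of K is nontrivial
    have hQnt : Nontrivial ↥(K.map π) := by
      have hne : ∃ x ∈ K.map π, x ≠ (1 : G ⧸ R) := by
        by_contra h
        push_neg at h
        apply hKns
        refine solvable_subgroup_of_le (B := R) ?_ hRs
        intro k hk
        have : π k = 1 := h (π k) ⟨k, hk, rfl⟩
        rw [hπdef] at this
        exact (QuotientGroup.eq_one_iff k).mp this
      obtain ⟨x, hx, hxne⟩ := hne
      exact ⟨⟨x, hx⟩, 1, fun h => hxne (congrArg Subtype.val h)⟩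
    haveI := hQnt
    -- perfection of the image
    have hQperf : commutator ↥(K.map π) = ⊤ :=
      perfect_of_surjective (π.subgroupMap K) (π.subgroupMap_surjective K) hKperf
    -- the center of the image is trivial
    have hcenter : Subgroup.center ↥(K.map π) = ⊥ := by
      rcases claimC (Subgroup.center ↥(K.map π)) inferInstance with h | h
      · exact h
      · exfalso
        have hcomm : IsSolvable ↥(K.map π) := by
          apply isSolvable_of_comm
          intro a b
          exact Subgroup.mem_center_iff.mp (h ▸ Subgroup.mem_top b) a
        exact not_solvable_of_perfect_nontrivial hQperf hQnt hcomm
    have hQsimple : IsSimpleGroup ↥(K.map π) := ⟨claimC⟩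
    have hsimplequot : IsSimpleGroup (↥(K.map π) ⧸ Subgroup.center ↥(K.map π)) := by
      have e : (↥(K.map π) ⧸ Subgroup.center ↥(K.map π)) ≃* ↥(K.map π) :=
        (QuotientGroup.quotientMulEquivOfEq hcenter).trans QuotientGroup.quotientBot
      exact isSimpleGroup_of_mulEquiv e.symm hQsimple
    exact ⟨hKsub, hKperf, hKsub.map π hπ, hQperf, hsimplequot⟩
end

section
/- Let G be a finite group, write Ḡ = G/Sol(G) and let π : G → Ḡ be the quotient map. Then the map K ↦ π(K) is a bijection from the set of sol-components of G onto the set of components of Ḡ. Its inverse sends a component K̄ of Ḡ to L^(∞), the stable (final) term of the derived series of the full preimage L = π⁻¹(K̄). -/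
open Pointwise

/-- The stable (final) term `G^(∞)` of the derived series of a finite group:
for a finite group the derived series is eventually constant and its stable
value is the infimum of its terms. -/
def stableDerived (G : Type*) [Group G] : Subgroup G :=
  ⨅ n : ℕ, derivedSeries G n

namespace SolComp

variable {G : Type*} [Group G]

/-- iterated commutator subgroup, as subgroups of the ambient group -/
def iterDer (H : Subgroup G) : ℕ → Subgroup G
  | 0 => H
  | n + 1 => ⁅iterDer H n, iterDer H n⁆

lemma iterDer_succ (H : Subgroup G) (n : ℕ) :
    iterDer H (n + 1) = ⁅iterDer H n, iterDer H n⁆ := rfl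

lemma iterDer_succ_le (H : Subgroup G) (n : ℕ) : iterDer H (n + 1) ≤ iterDer H n := by
  rw [iterDer_succ]
  refine Subgroup.commutator_le.mpr fun a ha b hb => ?_
  rw [commutatorElement_def]
  exact mul_mem (mul_mem (mul_mem ha hb) (inv_mem ha)) (inv_mem hb)

lemma iterDer_antitone (H : Subgroup G) : Antitone (iterDer H) :=
  antitone_nat_of_succ_le (iterDer_succ_le H)

lemma iterDer_mono {H K : Subgroup G} (h : H ≤ K) (n : ℕ) : iterDer H n ≤ iterDer K n := by
  induction n with
  | zero => exact h
  | succ n ih => exact Subgroup.commutator_mono ih ih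

lemma map_iterDer {G' : Type*} [Group G'] (f : G →* G') (H : Subgroup G) (n : ℕ) :
    (iterDer H n).map f = iterDer (H.map f) n := by
  induction n with
  | zero => rfl
  | succ n ih => rw [iterDer_succ, Subgroup.map_commutator, ih, iterDer_succ]

lemma derivedSeries_eq_iterDer_top (n : ℕ) :
    derivedSeries G n = iterDer (⊤ : Subgroup G) n := by
  induction n with
  | zero => rfl
  | succ n ih => rw [derivedSeries_succ, ih, iterDer_succ]

lemma map_subtype_derivedSeries (L : Subgroup G) (n : ℕ) :
    (derivedSeries ↥L n).map L.subtype = iterDer L n := by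
  rw [derivedSeries_eq_iterDer_top, map_iterDer, ← MonoidHom.range_eq_map, L.range_subtype]

lemma exists_min_iterDer [Finite G] (H : Subgroup G) :
    ∃ m, (∀ n, iterDer H m ≤ iterDer H n) ∧
      ⁅iterDer H m, iterDer H m⁆ = iterDer H m := by
  haveI : Finite (Subgroup G) := Finite.of_injective _ SetLike.coe_injective
  obtain ⟨A, ⟨m, rfl⟩, hmin⟩ := Set.Finite.exists_minimalFor id (Set.range (iterDer H))
    (Set.toFinite _) (Set.range_nonempty _)
  have key : ∀ n, iterDer H m ≤ iterDer H n := by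
    intro n
    rcases le_total n m with h | h
    · exact iterDer_antitone H h
    · have := hmin ⟨n, rfl⟩ (iterDer_antitone H h)
      simp only [id] at this
      exact this
  refine ⟨m, key, ?_⟩
  have := hmin ⟨m + 1, rfl⟩ (iterDer_succ_le H m)
  simp only [id] at this
  rw [← iterDer_succ]
  exact le_antisymm (iterDer_succ_le H m) this

lemma stableDerived_spec [Finite G] (L : Subgroup G) :
    ∃ m, stableDerived ↥L = derivedSeries ↥L m ∧
      (stableDerived ↥L).map L.subtype = iterDer L m ∧
      (∀ n, iterDer L m ≤ iterDer L n) ∧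
      ⁅iterDer L m, iterDer L m⁆ = iterDer L m := by
  obtain ⟨m, hmin, hperf⟩ := exists_min_iterDer (⊤ : Subgroup ↥L)
  have hD : ∀ n, derivedSeries ↥L n = iterDer (⊤ : Subgroup ↥L) n :=
    derivedSeries_eq_iterDer_top
  have hst : stableDerived ↥L = derivedSeries ↥L m := by
    refine le_antisymm (iInf_le _ m) (le_iInf fun n => ?_)
    rw [hD, hD]; exact hmin n
  have hmap : (stableDerived ↥L).map L.subtype = iterDer L m := by
    rw [hst, map_subtype_derivedSeries]
  refine ⟨m, hst, hmap, fun n => ?_, ?_⟩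
  · rw [← map_subtype_derivedSeries, ← map_subtype_derivedSeries]
    exact Subgroup.map_mono (by rw [hD, hD]; exact hmin n)
  · rw [← map_subtype_derivedSeries, ← Subgroup.map_commutator]
    congr 1
    rw [hD, hperf, ← hD]

lemma commutator_eq_top_iff (K : Subgroup G) : commutator ↥K = ⊤ ↔ ⁅K, K⁆ = K := by
  have hmap : (commutator ↥K).map K.subtype = ⁅K, K⁆ := by
    rw [commutator_def, Subgroup.map_commutator, ← MonoidHom.range_eq_map, K.range_subtype]
  have htop : (⊤ : Subgroup ↥K).map K.subtype = K := by
    rw [← MonoidHom.range_eq_map, K.range_subtype]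
  constructor
  · intro h; rw [← hmap, h, htop]
  · intro h
    apply Subgroup.map_injective K.subtype_injective
    rw [hmap, h, htop]

lemma solRadical_isSolvable (G : Type*) [Group G] [Finite G] :
    IsSolvable ↥(solRadical G) := by
  haveI : Finite (Subgroup G) := Finite.of_injective _ SetLike.coe_injective
  set s := {N : Subgroup G | N.Normal ∧ IsSolvable ↥N} with hs
  have hbot : (⊥ : Subgroup G) ∈ s := by
    refine ⟨inferInstance, ?_⟩
    haveI : Subsingleton ↥(⊥ : Subgroup G) := ⟨fun a b => Subtype.ext (by
      rw [Subgroup.mem_bot.mp a.2, Subgroup.mem_bot.mp b.2])⟩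
    exact ⟨⟨0, Subsingleton.elim _ _⟩⟩
  have hsup : ∀ N₁ ∈ s, ∀ N₂ ∈ s, N₁ ⊔ N₂ ∈ s := by
    intro N₁ h₁ N₂ h₂
    haveI := h₁.1; haveI := h₂.1; haveI : Group.IsSolvable ↥N₁ := h₁.2; haveI : Group.IsSolvable ↥N₂ := h₂.2
    refine ⟨inferInstance, ?_⟩
    set M := N₁.subgroupOf (N₁ ⊔ N₂) with hM
    haveI : M.Normal := Subgroup.normal_subgroupOf
    haveI : Group.IsSolvable ↥M :=
      solvable_of_solvable_injective
        (f := (Subgroup.subgroupOfEquivOfLe (le_sup_left : N₁ ≤ N₁ ⊔ N₂)).toMonoidHom)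
        (Subgroup.subgroupOfEquivOfLe (le_sup_left : N₁ ≤ N₁ ⊔ N₂)).injective
    haveI : Group.IsSolvable (↥(N₁ ⊔ N₂) ⧸ M) := by
      refine solvable_of_surjective (f := (QuotientGroup.mk' M).comp
        (Subgroup.inclusion (le_sup_right : N₂ ≤ N₁ ⊔ N₂))) ?_
      intro q
      obtain ⟨x, rfl⟩ := QuotientGroup.mk'_surjective M q
      have hx : (x : G) ∈ (N₁ : Set G) * N₂ := by
        rw [← Subgroup.mul_normal]; exact x.2
      obtain ⟨a, ha, b, hb, hab⟩ := hx
      have hab' : a * b = (x : G) := hab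
      have hbH : b ∈ N₁ ⊔ N₂ := Subgroup.mem_sup_right hb
      refine ⟨⟨b, hb⟩, ?_⟩
      show QuotientGroup.mk' M ⟨b, hbH⟩ = QuotientGroup.mk' M x
      rw [QuotientGroup.mk'_eq_mk']
      refine ⟨(⟨b, hbH⟩ : ↥(N₁ ⊔ N₂))⁻¹ * x, ?_, by group⟩
      have hmem : b⁻¹ * (a * b) ∈ N₁ := by
        have := h₁.1.conj_mem a ha b⁻¹
        simpa [mul_assoc] using this
      have hcoe : (((⟨b, hbH⟩ : ↥(N₁ ⊔ N₂))⁻¹ * x : ↥(N₁ ⊔ N₂)) : G) = b⁻¹ * (a * b) := by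
        rw [hab']; rfl
      rw [Subgroup.mem_subgroupOf, hcoe]
      exact hmem
    exact solvable_of_ker_le_range M.subtype (QuotientGroup.mk' M)
      (by rw [QuotientGroup.ker_mk', Subgroup.range_subtype])
  obtain ⟨Mx, hMx, hmax⟩ := Set.Finite.exists_maximalFor id s (Set.toFinite _) ⟨⊥, hbot⟩
  have heq : solRadical G = Mx := by
    refine le_antisymm (sSup_le fun N hN => ?_) (le_sSup hMx)
    have h1 : Mx ⊔ N ∈ s := hsup Mx hMx N hN
    have h2 := hmax h1 le_sup_left
    simp only [id] at h2
    calc N ≤ Mx ⊔ N := le_sup_right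
      _ ≤ Mx := h2
  rw [heq]
  exact hMx.2

end SolComp

namespace SolComp

variable {G : Type*} [Group G]

lemma exists_iterDer_le [Finite G] {M N : Subgroup G} (hMN : M ≤ N)
    (hconj : ∀ a ∈ M, ∀ b ∈ N, b * a * b⁻¹ ∈ M)
    (hle : N ≤ M ⊔ solRadical G) : ∃ k, iterDer N k ≤ M := by
  haveI hnorm : (M.subgroupOf N).Normal :=
    (Subgroup.normal_subgroupOf_iff hMN).mpr fun h k hh hk => hconj h hh k hk
  haveI : Group.IsSolvable ↥(solRadical G) := solRadical_isSolvable G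
  haveI : Group.IsSolvable ↥(N ⊓ solRadical G) :=
    solvable_of_solvable_injective
      (f := Subgroup.inclusion (inf_le_right : N ⊓ solRadical G ≤ solRadical G))
      (Subgroup.inclusion_injective _)
  haveI : Group.IsSolvable (↥N ⧸ M.subgroupOf N) := by
    refine solvable_of_surjective (f := (QuotientGroup.mk' (M.subgroupOf N)).comp
      (Subgroup.inclusion (inf_le_left : N ⊓ solRadical G ≤ N))) ?_
    intro q
    obtain ⟨x, rfl⟩ := QuotientGroup.mk'_surjective _ q
    have hx : (x : G) ∈ (M : Set G) * solRadical G := by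
      rw [← Subgroup.mul_normal]; exact hle x.2
    obtain ⟨a, ha, b, hb, hab⟩ := hx
    have hab' : a * b = (x : G) := hab
    have hbN : b ∈ N := by
      have : b = a⁻¹ * (x : G) := by rw [← hab']; group
      rw [this]; exact mul_mem (inv_mem (hMN ha)) x.2
    refine ⟨⟨b, ⟨hbN, hb⟩⟩, ?_⟩
    show QuotientGroup.mk' _ ⟨b, hbN⟩ = QuotientGroup.mk' _ x
    rw [QuotientGroup.mk'_eq_mk']
    refine ⟨(⟨b, hbN⟩ : ↥N)⁻¹ * x, ?_, by group⟩
    have hmem : b⁻¹ * (a * b) ∈ M := by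
      have := hconj a ha b⁻¹ (inv_mem hbN)
      simpa [mul_assoc] using this
    have hcoe : (((⟨b, hbN⟩ : ↥N)⁻¹ * x : ↥N) : G) = b⁻¹ * (a * b) := by
      rw [hab']; rfl
    rw [Subgroup.mem_subgroupOf, hcoe]
    exact hmem
  obtain ⟨k, hk⟩ := (inferInstance : Group.IsSolvable (↥N ⧸ M.subgroupOf N)).solvable
  refine ⟨k, ?_⟩
  have h1 : derivedSeries ↥N k ≤ M.subgroupOf N := by
    have hmapD : (derivedSeries ↥N k).map (QuotientGroup.mk' (M.subgroupOf N)) = ⊥ := by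
      rw [map_derivedSeries_eq (QuotientGroup.mk'_surjective _), hk]
    have := (Subgroup.map_eq_bot_iff _).mp hmapD
    rwa [QuotientGroup.ker_mk'] at this
  calc iterDer N k = (derivedSeries ↥N k).map N.subtype :=
        (map_subtype_derivedSeries N k).symm
    _ ≤ (M.subgroupOf N).map N.subtype := Subgroup.map_mono h1
    _ = M ⊓ N := Subgroup.subgroupOf_map_subtype M N
    _ ≤ M := inf_le_left

lemma eq_of_solComponent [Finite G] {K : Subgroup G} {C : Subgroup (G ⧸ solRadical G)}
    (hsub : IsSubnormal K) (hperf : ⁅K, K⁆ = K)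
    (hmap : K.map (QuotientGroup.mk' (solRadical G)) = C) :
    K = (stableDerived ↥(C.comap (QuotientGroup.mk' (solRadical G)))).map
      (C.comap (QuotientGroup.mk' (solRadical G))).subtype := by
  set π := QuotientGroup.mk' (solRadical G) with hπ
  set L := C.comap π with hL
  obtain ⟨m, hst, hmapst, hmin, hperfL⟩ := stableDerived_spec L
  rw [hmapst]
  have hKL : K ≤ L := by
    intro x hx
    exact Subgroup.mem_comap.mpr (hmap ▸ Subgroup.mem_map_of_mem π hx)
  have hK_le : ∀ n, K ≤ iterDer L n := by
    intro n
    induction n with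
    | zero => exact hKL
    | succ n ih =>
      calc K = ⁅K, K⁆ := hperf.symm
        _ ≤ ⁅iterDer L n, iterDer L n⁆ := Subgroup.commutator_mono ih ih
        _ = iterDer L (n + 1) := (iterDer_succ L n).symm
  obtain ⟨n, c, hc0, hcn, hstep⟩ := hsub
  have hchain : ∀ j, j ≤ n → c 0 ≤ c j := by
    intro j
    induction j with
    | zero => exact fun _ => le_rfl
    | succ j ih =>
      intro hj
      exact (ih (Nat.le_of_succ_le hj)).trans (hstep j (Nat.lt_of_succ_le hj)).1
  have main : ∀ i, i ≤ n → ∃ k, iterDer (c i ⊓ L) k ≤ K := by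
    intro i
    induction i with
    | zero =>
      intro _
      refine ⟨0, ?_⟩
      show c 0 ⊓ L ≤ K
      rw [hc0, inf_eq_left.mpr hKL]
    | succ i ih =>
      intro hin
      obtain ⟨k, hk⟩ := ih (Nat.le_of_succ_le hin)
      have hstepi := hstep i (Nat.lt_of_succ_le hin)
      have hMN : c i ⊓ L ≤ c (i + 1) ⊓ L := inf_le_inf_right L hstepi.1
      have hconj : ∀ a ∈ c i ⊓ L, ∀ b ∈ c (i + 1) ⊓ L, b * a * b⁻¹ ∈ c i ⊓ L := by
        intro a ha b hb
        rw [Subgroup.mem_inf] at ha hb ⊢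
        exact ⟨(Subgroup.normal_subgroupOf_iff hstepi.1).mp hstepi.2 a b ha.1 hb.1,
          mul_mem (mul_mem hb.2 ha.2) (inv_mem hb.2)⟩
      have hKM : K ≤ c i ⊓ L :=
        le_inf (hc0 ▸ hchain i (Nat.le_of_succ_le hin)) hKL
      have hNle : c (i + 1) ⊓ L ≤ (c i ⊓ L) ⊔ solRadical G := by
        intro x hx
        rw [Subgroup.mem_inf] at hx
        have hxC : π x ∈ K.map π := by
          rw [hmap]; exact Subgroup.mem_comap.mp hx.2
        obtain ⟨y, hy, hyx⟩ := hxC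
        have hs : y⁻¹ * x ∈ solRadical G := by
          have h1 : π (y⁻¹ * x) = 1 := by
            rw [map_mul, map_inv, hyx, inv_mul_cancel]
          have := QuotientGroup.ker_mk' (solRadical G)
          rw [← this]
          exact h1
        have hxeq : x = y * (y⁻¹ * x) := by group
        rw [hxeq]
        exact mul_mem (Subgroup.mem_sup_left (hKM hy)) (Subgroup.mem_sup_right hs)
      obtain ⟨k', hk'⟩ := exists_iterDer_le hMN hconj hNle
      obtain ⟨mN, hminN, hperfN⟩ := exists_min_iterDer (c (i + 1) ⊓ L)
      refine ⟨mN, ?_⟩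
      have hWM : iterDer (c (i + 1) ⊓ L) mN ≤ c i ⊓ L := (hminN k').trans hk'
      have hWj : ∀ j, iterDer (c (i + 1) ⊓ L) mN ≤ iterDer (c i ⊓ L) j := by
        intro j
        induction j with
        | zero => exact hWM
        | succ j ihj =>
          calc iterDer (c (i + 1) ⊓ L) mN
              = ⁅iterDer (c (i + 1) ⊓ L) mN, iterDer (c (i + 1) ⊓ L) mN⁆ := hperfN.symm
            _ ≤ ⁅iterDer (c i ⊓ L) j, iterDer (c i ⊓ L) j⁆ :=
                Subgroup.commutator_mono ihj ihj
            _ = iterDer (c i ⊓ L) (j + 1) := (iterDer_succ _ j).symm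
      exact (hWj k).trans hk
  obtain ⟨k, hk⟩ := main n le_rfl
  rw [hcn, top_inf_eq] at hk
  exact le_antisymm (hK_le m) ((hmin k).trans hk)

end SolComp

namespace SolComp

lemma part2 {G : Type*} [Group G] [Finite G] {C : Subgroup (G ⧸ solRadical G)}
    (hC : IsComponent C) :
    IsSolComponent
        ((stableDerived ↥(C.comap (QuotientGroup.mk' (solRadical G)))).map
          (C.comap (QuotientGroup.mk' (solRadical G))).subtype) ∧
      Subgroup.map (QuotientGroup.mk' (solRadical G))
        ((stableDerived ↥(C.comap (QuotientGroup.mk' (solRadical G)))).map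
          (C.comap (QuotientGroup.mk' (solRadical G))).subtype) = C := by
  set π := QuotientGroup.mk' (solRadical G) with hπ
  set L := C.comap π with hL
  obtain ⟨m, hst, hmapst, hmin, hperfL⟩ := stableDerived_spec L
  set K := (stableDerived ↥L).map L.subtype with hK
  have hKm : K = iterDer L m := hmapst
  have hπL : L.map π = C :=
    Subgroup.map_comap_eq_self_of_surjective (QuotientGroup.mk'_surjective _) C
  have hCC : ⁅C, C⁆ = C := (commutator_eq_top_iff C).mp hC.2.1
  have hmapK : ∀ n, (iterDer L n).map π = C := by
    intro n
    induction n with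
    | zero => exact hπL
    | succ n ih => rw [iterDer_succ, Subgroup.map_commutator, ih, hCC]
  have hmapKC : K.map π = C := by rw [hKm]; exact hmapK m
  have hKperf : ⁅K, K⁆ = K := by rw [hKm]; exact hperfL
  have hKL : K ≤ L := by rw [hKm]; exact hmin 0
  have hKnormL : (K.subgroupOf L).Normal := by
    have h1 : K.subgroupOf L = stableDerived ↥L := by
      rw [hK, ← Subgroup.comap_subtype,
        Subgroup.comap_map_eq_self_of_injective L.subtype_injective]
    rw [h1, hst]
    exact derivedSeries_normal _ m
  have hsubn : IsSubnormal K := by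
    obtain ⟨n, c, hc0, hcn, hstep⟩ := hC.1
    refine ⟨n + 1, fun i => if i = 0 then K else (c (i - 1)).comap π, by simp, ?_, ?_⟩
    · show (if n + 1 = 0 then K else (c (n + 1 - 1)).comap π) = ⊤
      rw [if_neg (Nat.succ_ne_zero n), Nat.add_sub_cancel, hcn, Subgroup.comap_top]
    · intro i hi
      match i with
      | 0 =>
        show K ≤ (c 0).comap π ∧ (K.subgroupOf ((c 0).comap π)).Normal
        rw [hc0]
        exact ⟨hKL, hKnormL⟩
      | Nat.succ j =>
        have hj : j < n := Nat.lt_of_succ_lt_succ hi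
        show (c j).comap π ≤ (c (j + 1)).comap π ∧
          (((c j).comap π).subgroupOf ((c (j + 1)).comap π)).Normal
        refine ⟨Subgroup.comap_mono (hstep j hj).1, ?_⟩
        refine (Subgroup.normal_subgroupOf_iff (Subgroup.comap_mono (hstep j hj).1)).mpr ?_
        intro h k hh hk
        rw [Subgroup.mem_comap] at hh hk ⊢
        rw [map_mul, map_mul, map_inv]
        exact (Subgroup.normal_subgroupOf_iff (hstep j hj).1).mp (hstep j hj).2 _ _ hh hk
  refine ⟨⟨hsubn, (commutator_eq_top_iff K).mpr hKperf, ?_⟩, hmapKC⟩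
  show IsComponent (K.map π)
  rw [hmapKC]
  exact hC

end SolComp


/-- The map `K ↦ π(K)` (image under the quotient map
`π : G → G/Sol(G)`) is a bijection from the set of sol-components of `G` onto the
set of components of `G/Sol(G)`; its inverse sends a component `K̄` of `G/Sol(G)` to
`L^(∞)`, the stable term of the derived series of the full preimage `L = π⁻¹(K̄)`. -/
theorem solComponents_biject_with_components_of_quotient
    {G : Type*} [Group G] [Finite G] :
    Set.BijOn (Subgroup.map (QuotientGroup.mk' (solRadical G)))
      {K : Subgroup G | IsSolComponent K}
      {C : Subgroup (G ⧸ solRadical G) | IsComponent C} ∧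
    ∀ C : Subgroup (G ⧸ solRadical G), IsComponent C →
      IsSolComponent
        ((stableDerived ↥(C.comap (QuotientGroup.mk' (solRadical G)))).map
          (C.comap (QuotientGroup.mk' (solRadical G))).subtype) ∧
      Subgroup.map (QuotientGroup.mk' (solRadical G))
        ((stableDerived ↥(C.comap (QuotientGroup.mk' (solRadical G)))).map
          (C.comap (QuotientGroup.mk' (solRadical G))).subtype) = C := by
  refine ⟨⟨fun K hK => hK.2.2, fun K₁ h₁ K₂ h₂ heq => ?_, fun C hC => ?_⟩,
    fun C hC => SolComp.part2 hC⟩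
  · have e1 := SolComp.eq_of_solComponent h₁.1
      ((SolComp.commutator_eq_top_iff K₁).mp h₁.2.1) rfl
    have e2 := SolComp.eq_of_solComponent h₂.1
      ((SolComp.commutator_eq_top_iff K₂).mp h₂.2.1) heq.symm
    exact e1.trans e2.symm
  · exact ⟨_, (SolComp.part2 hC).1, (SolComp.part2 hC).2⟩
end

section
/- Let G = K₁ × ⋯ × K_n be a direct product of nonabelian simple groups K₁, …, K_n with projections π_i : G → K_i, and let H be an overdiagonal subgroup of G. Then there exists a unique partition {𝓛₁, …, 𝓛_m} of {K₁, …, K_n} such that, writing G_j for the subgroup generated by the members of 𝓛_j, the group H is the internal direct product of the subgroups H ∩ G₁, …, H ∩ G_m, and for each j the subgroup H ∩ G_j is a diagonal subgroup of G_j. -/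
namespace OverdiagAux

variable {n : ℕ} {K : Fin n → Type*} [∀ i, Group (K i)]

/-- Coordinate `j` determines coordinate `i` on `H`. -/
def Rel (H : Subgroup (∀ i, K i)) (i j : Fin n) : Prop :=
  ∀ h ∈ H, h j = 1 → h i = 1

lemma rel_refl (H : Subgroup (∀ i, K i)) (i : Fin n) : Rel H i i := fun _ _ h => h

lemma rel_trans {H : Subgroup (∀ i, K i)} {i j k : Fin n} (h1 : Rel H i j) (h2 : Rel H j k) :
    Rel H i k := fun h hH hk => h1 h hH (h2 h hH hk)

variable {H : Subgroup (∀ i, K i)}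

lemma exists_pre (hover : ∀ i, H.map (Pi.evalMonoidHom K i) = ⊤) (i : Fin n) (x : K i) :
    ∃ h ∈ H, h i = x := by
  have hx : x ∈ H.map (Pi.evalMonoidHom K i) := by rw [hover]; trivial
  rcases hx with ⟨h, hh, hx⟩
  exact ⟨h, hh, hx⟩

lemma normal_inf_pi (hover : ∀ i, H.map (Pi.evalMonoidHom K i) = ⊤)
    (T : Set (Fin n)) (i : Fin n) :
    ((H ⊓ Subgroup.pi T fun _ => ⊥).map (Pi.evalMonoidHom K i)).Normal := by
  constructor
  intro a ha g
  rw [Subgroup.mem_map] at ha ⊢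
  rcases ha with ⟨b, hb, rfl⟩
  rcases exists_pre hover i g with ⟨h, hh, rfl⟩
  refine ⟨h * b * h⁻¹, Subgroup.mem_inf.mpr ⟨mul_mem (mul_mem hh hb.1) (inv_mem hh), ?_⟩, by simp⟩
  intro j hj
  have hbj : b j = 1 := by simpa using hb.2 j hj
  simp [Subgroup.mem_bot, hbj]

variable [∀ i, IsSimpleGroup (K i)]

lemma pi_map_eq_top (hover : ∀ i, H.map (Pi.evalMonoidHom K i) = ⊤)
    (i : Fin n) (T : Set (Fin n))
    (hne : ¬ ∀ h ∈ H, (∀ j ∈ T, h j = 1) → h i = 1) :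
    (H ⊓ Subgroup.pi T fun _ => ⊥).map (Pi.evalMonoidHom K i) = ⊤ := by
  have hn := normal_inf_pi hover T i
  rcases hn.eq_bot_or_eq_top with hb | ht
  · exfalso
    apply hne
    intro h hh hT
    have hmem : h ∈ H ⊓ Subgroup.pi T fun _ => ⊥ := by
      refine ⟨hh, ?_⟩
      intro j hj
      simpa using hT j hj
    have : (Pi.evalMonoidHom K i) h ∈ (H ⊓ Subgroup.pi T fun _ => ⊥).map (Pi.evalMonoidHom K i) :=
      Subgroup.mem_map.mpr ⟨h, hmem, rfl⟩
    rw [hb] at this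
    simpa using this
  · exact ht

lemma comm_top (hna : ∀ i, ¬ ∀ x y : K i, Commute x y) (i : Fin n) :
    ⁅(⊤ : Subgroup (K i)), (⊤ : Subgroup (K i))⁆ = ⊤ := by
  rcases (Subgroup.commutator_normal (⊤ : Subgroup (K i)) ⊤).eq_bot_or_eq_top with hb | ht
  · exfalso
    apply hna i
    intro x y
    open commutatorElement in have : ⁅x, y⁆ ∈ ⁅(⊤ : Subgroup (K i)), (⊤ : Subgroup (K i))⁆ :=
      Subgroup.commutator_mem_commutator trivial trivial
    rw [hb] at this
    exact commutatorElement_eq_one_iff_commute.mp (by simpa using this)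
  · exact ht

lemma key (hover : ∀ i, H.map (Pi.evalMonoidHom K i) = ⊤)
    (hna : ∀ i, ¬ ∀ x y : K i, Commute x y)
    (i : Fin n) (T : Finset (Fin n)) (hT : ∀ j ∈ T, ¬ Rel H i j) :
    (H ⊓ Subgroup.pi ↑T fun _ => ⊥).map (Pi.evalMonoidHom K i) = ⊤ := by
  induction T using Finset.induction_on with
  | empty =>
    have hpi : (Subgroup.pi (↑(∅ : Finset (Fin n))) fun j => (⊥ : Subgroup (K j))) = ⊤ := by
      ext x; simp [Subgroup.mem_pi]
    rw [hpi, inf_top_eq, hover i]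
  | @insert j T hj ih =>
    have hA : (H ⊓ Subgroup.pi ↑T fun _ => ⊥).map (Pi.evalMonoidHom K i) = ⊤ :=
      ih fun k hk => hT k (Finset.mem_insert_of_mem hk)
    have hB : (H ⊓ Subgroup.pi {j} fun _ => ⊥).map (Pi.evalMonoidHom K i) = ⊤ := by
      apply pi_map_eq_top hover
      intro hall
      exact hT j (Finset.mem_insert_self j T) fun h hh hhj =>
        hall h hh (by intro k hk; rcases hk; exact hhj)
    have hle : ⁅H ⊓ Subgroup.pi ↑T fun _ => ⊥, H ⊓ Subgroup.pi {j} fun _ => ⊥⁆ ≤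
        H ⊓ Subgroup.pi ↑(insert j T) fun _ => ⊥ := by
      rw [Subgroup.commutator_le]
      intro a ha b hb
      refine Subgroup.mem_inf.mpr ⟨?_, ?_⟩
      · have := ha.1; have := hb.1
        simp only [commutatorElement_def]
        exact mul_mem (mul_mem (mul_mem ha.1 hb.1) (inv_mem ha.1)) (inv_mem hb.1)
      · intro k hk
        simp only [Finset.coe_insert, Set.mem_insert_iff] at hk
        rcases hk with rfl | hk
        · have hbk : b k = 1 := by simpa using hb.2 k rfl
          simp [commutatorElement_def, hbk, Subgroup.mem_bot]
        · have hak : a k = 1 := by simpa using ha.2 k hk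
          simp [commutatorElement_def, hak, Subgroup.mem_bot]
    have := Subgroup.map_mono (f := Pi.evalMonoidHom K i) hle
    rw [Subgroup.map_commutator, hA, hB, comm_top hna i] at this
    exact top_le_iff.mp this

lemma rel_symm (hover : ∀ i, H.map (Pi.evalMonoidHom K i) = ⊤)
    (hna : ∀ i, ¬ ∀ x y : K i, Commute x y) {i j : Fin n} (h : Rel H i j) : Rel H j i := by
  by_contra hc
  simp only [Rel, not_forall] at hc
  obtain ⟨g, hg, hgi, hgj⟩ := hc
  have hN : (H ⊓ Subgroup.pi {i} fun _ => ⊥).map (Pi.evalMonoidHom K j) = ⊤ := by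
    apply pi_map_eq_top hover
    intro hall
    exact hgj (hall g hg fun k hk => by rcases hk; exact hgi)
  apply hna i
  suffices hall : ∀ x : K i, x = 1 by
    intro x y; rw [hall x, hall y]
  intro x
  obtain ⟨a, ha, hax⟩ := exists_pre hover i x
  have hmem : (a j)⁻¹ ∈ (H ⊓ Subgroup.pi {i} fun _ => ⊥).map (Pi.evalMonoidHom K j) := by
    rw [hN]; trivial
  rw [Subgroup.mem_map] at hmem
  obtain ⟨b, hb, hbj⟩ := hmem
  have hbi : b i = 1 := by simpa using hb.2 i rfl
  have h1 : (a * b) j = 1 := by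
    simp only [Pi.mul_apply]
    rw [show (Pi.evalMonoidHom K j) b = b j from rfl] at hbj
    rw [hbj, mul_inv_cancel]
  have h2 := h (a * b) (mul_mem ha hb.1) h1
  simp only [Pi.mul_apply, hax, hbi, mul_one] at h2
  exact h2


end OverdiagAux

namespace OverdiagAux

variable {n : ℕ} {K : Fin n → Type*} [∀ i, Group (K i)]

/-- The class of `a` under `Rel`. -/
def cls (H : Subgroup (∀ i, K i)) (a : Fin n) : Set (Fin n) := {x | Rel H x a}

lemma mem_cls {H : Subgroup (∀ i, K i)} {x a : Fin n} : x ∈ cls H a ↔ Rel H x a := Iff.rfl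

lemma self_mem_cls {H : Subgroup (∀ i, K i)} (a : Fin n) : a ∈ cls H a := rel_refl H a

end OverdiagAux

open OverdiagAux in
/-- Let `G = K₁ × ⋯ × K_n` be a direct product of nonabelian simple
groups with projections `π i`, and let `H` be an overdiagonal subgroup of `G`
(i.e. `π i (H) = K i` for every `i`).  Then there is a unique partition
`P` of the set of factors (formalized as a partition of the index set `Fin n`) such
that, writing `G_s = {x | x i = 1 for i ∉ s}` for the subgroup generated by the
factors in a block `s`, the subgroup `H` is the internal direct product of the
subgroups `H ⊓ G_s` for `s ∈ P` (they pairwise commute elementwise, their join is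
`H`, and each meets the join of the others trivially), and for each `s ∈ P` the
subgroup `H ⊓ G_s` is a diagonal subgroup of `G_s` (for every `i ∈ s` the projection
`π i` restricts to an isomorphism of `H ⊓ G_s` onto `K i`). -/
theorem overdiagonal_unique_partition_into_diagonals
    {n : ℕ} (K : Fin n → Type*) [∀ i, Group (K i)] [∀ i, Finite (K i)]
    [∀ i, IsSimpleGroup (K i)] (hna : ∀ i, ¬ ∀ x y : K i, Commute x y)
    (H : Subgroup (∀ i, K i))
    (hover : ∀ i, H.map (Pi.evalMonoidHom K i) = ⊤) :
    ∃! P : Set (Set (Fin n)),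
      Setoid.IsPartition P ∧
      (∀ s ∈ P, ∀ t ∈ P, s ≠ t →
        ∀ x ∈ H ⊓ Subgroup.pi sᶜ (fun i => (⊥ : Subgroup (K i))),
          ∀ y ∈ H ⊓ Subgroup.pi tᶜ (fun i => (⊥ : Subgroup (K i))), Commute x y) ∧
      (⨆ s ∈ P, (H ⊓ Subgroup.pi sᶜ (fun i => (⊥ : Subgroup (K i))))) = H ∧
      (∀ s ∈ P,
        (H ⊓ Subgroup.pi sᶜ (fun i => (⊥ : Subgroup (K i)))) ⊓
          (⨆ t ∈ P, ⨆ _ : t ≠ s, (H ⊓ Subgroup.pi tᶜ (fun i => (⊥ : Subgroup (K i))))) = ⊥) ∧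
      (∀ s ∈ P, ∀ i ∈ s,
        Function.Bijective
          (fun x : ↥(H ⊓ Subgroup.pi sᶜ (fun i => (⊥ : Subgroup (K i)))) =>
            Pi.evalMonoidHom K i (x : ∀ j, K j))) := by
  classical
  have hsymm : ∀ {i j : Fin n}, Rel H i j → Rel H j i := fun h => rel_symm hover hna h
  have cls_eq : ∀ {a b : Fin n}, Rel H a b → cls H a = cls H b := by
    intro a b hab
    ext x
    exact ⟨fun hx => rel_trans hx hab, fun hx => rel_trans hx (hsymm hab)⟩
  have cls_eq_of_mem : ∀ {a b : Fin n}, a ∈ cls H b → cls H a = cls H b :=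
    fun h => cls_eq h
  have hPmem : ∀ a, cls H a ∈ {s | ∃ a, s = cls H a} := fun a => ⟨a, rfl⟩
  have hpart : Setoid.IsPartition {s | ∃ a, s = cls H a} := by
    constructor
    · rintro ⟨a, ha⟩
      exact absurd (self_mem_cls (H := H) a) (by rw [← ha]; simp)
    · intro a
      refine ⟨cls H a, ⟨hPmem a, self_mem_cls a⟩, ?_⟩
      rintro s ⟨⟨b, rfl⟩, hab⟩
      exact (cls_eq_of_mem hab).symm
  have hdisjP : ∀ s ∈ {s | ∃ a, s = cls H a}, ∀ t ∈ {s | ∃ a, s = cls H a}, s ≠ t →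
      ∀ k, k ∈ s → k ∉ t := by
    rintro s ⟨a, rfl⟩ t ⟨b, rfl⟩ hst k hks hkt
    exact hst ((cls_eq_of_mem hks).symm.trans (cls_eq_of_mem hkt))
  have diagSurj : ∀ i : Fin n,
      (H ⊓ Subgroup.pi (cls H i)ᶜ fun j => (⊥ : Subgroup (K j))).map (Pi.evalMonoidHom K i) = ⊤ := by
    intro i
    have hfin : ((cls H i)ᶜ : Set (Fin n)).Finite := Set.toFinite _
    have hkey := key hover hna i hfin.toFinset ?hT
    · rwa [Set.Finite.coe_toFinset] at hkey
    case hT =>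
      intro j hj
      rw [Set.Finite.mem_toFinset] at hj
      exact fun hrel => hj (hsymm hrel)
  have diagInj : ∀ i : Fin n, ∀ x ∈ H ⊓ Subgroup.pi (cls H i)ᶜ fun j => (⊥ : Subgroup (K j)),
      x i = 1 → x = 1 := by
    intro i x hx hxi
    funext j
    show x j = 1
    by_cases hj : j ∈ cls H i
    · exact hj x hx.1 hxi
    · simpa using hx.2 j hj
  have partial_elem : ∀ h ∈ H, ∀ i : Fin n,
      ∃ g ∈ H ⊓ Subgroup.pi (cls H i)ᶜ fun j => (⊥ : Subgroup (K j)),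
        ∀ j ∈ cls H i, g j = h j := by
    intro h hh i
    have hm : h i ∈ (H ⊓ Subgroup.pi (cls H i)ᶜ fun j => (⊥ : Subgroup (K j))).map
        (Pi.evalMonoidHom K i) := by rw [diagSurj i]; trivial
    rw [Subgroup.mem_map] at hm
    obtain ⟨g, hg, hgi⟩ := hm
    refine ⟨g, hg, ?_⟩
    intro j hj
    have h1 : (g⁻¹ * h) i = 1 := by
      simp only [Pi.mul_apply, Pi.inv_apply]
      rw [show (Pi.evalMonoidHom K i) g = g i from rfl] at hgi
      rw [hgi, inv_mul_cancel]
    have h2 := hj (g⁻¹ * h) (mul_mem (inv_mem hg.1) hh) h1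
    simp only [Pi.mul_apply, Pi.inv_apply] at h2
    exact inv_mul_eq_one.mp h2
  have hJle : (⨆ s ∈ {s | ∃ a, s = cls H a},
      (H ⊓ Subgroup.pi sᶜ fun j => (⊥ : Subgroup (K j)))) ≤ H :=
    iSup_le fun s => iSup_le fun _ => inf_le_left
  have hmain : ∀ N : ℕ, ∀ h ∈ H,
      (Finset.univ.filter fun k => h k ≠ 1).card ≤ N →
      h ∈ ⨆ s ∈ {s | ∃ a, s = cls H a}, (H ⊓ Subgroup.pi sᶜ fun j => (⊥ : Subgroup (K j))) := by
    intro N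
    induction N with
    | zero =>
      intro h hh hcard
      have h1 : h = 1 := by
        funext k
        show h k = 1
        by_contra hk
        have hk' : k ∈ Finset.univ.filter fun k => h k ≠ 1 := by simp [hk]
        have := Finset.card_pos.mpr ⟨k, hk'⟩
        omega
      rw [h1]; exact one_mem _
    | succ N ih =>
      intro h hh hcard
      by_cases h1 : h = 1
      · rw [h1]; exact one_mem _
      · have hex : ∃ i, h i ≠ 1 := by
          by_contra hc
          push_neg at hc
          exact h1 (funext fun k => hc k)
        obtain ⟨i, hi⟩ := hex
        obtain ⟨g, hg, hgj⟩ := partial_elem h hh i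
        have hgJ : g ∈ ⨆ s ∈ {s | ∃ a, s = cls H a},
            (H ⊓ Subgroup.pi sᶜ fun j => (⊥ : Subgroup (K j))) := by
          apply Subgroup.mem_iSup_of_mem (cls H i)
          apply Subgroup.mem_iSup_of_mem (hPmem i)
          exact hg
        have hrest : g⁻¹ * h ∈ H := mul_mem (inv_mem hg.1) hh
        have hsub : (Finset.univ.filter fun k => (g⁻¹ * h) k ≠ 1) ⊆
            (Finset.univ.filter fun k => h k ≠ 1) \ {i} := by
          intro k hk
          simp only [Finset.mem_filter, Finset.mem_univ, true_and, Pi.mul_apply,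
            Pi.inv_apply] at hk
          by_cases hkc : k ∈ cls H i
          · exact absurd (by rw [hgj k hkc]; simp) hk
          · have hgk : g k = 1 := by simpa using hg.2 k hkc
            have hhk : h k ≠ 1 := by
              intro hc; apply hk; rw [hgk, hc]; simp
            simp only [Finset.mem_sdiff, Finset.mem_filter, Finset.mem_univ, true_and,
              Finset.mem_singleton]
            exact ⟨hhk, fun hki => hkc (by rw [hki]; exact self_mem_cls i)⟩
        have hcard' : (Finset.univ.filter fun k => (g⁻¹ * h) k ≠ 1).card ≤ N := by
          have hi' : i ∈ Finset.univ.filter fun k => h k ≠ 1 := by simp [hi]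
          have hle := Finset.card_le_card hsub
          rw [Finset.card_sdiff_of_subset (by simpa using hi')] at hle
          simp only [Finset.card_singleton] at hle
          omega
        have hmem := ih (g⁻¹ * h) hrest hcard'
        have := mul_mem hgJ hmem
        simpa using this
  have hjoin : (⨆ s ∈ {s | ∃ a, s = cls H a},
      (H ⊓ Subgroup.pi sᶜ fun j => (⊥ : Subgroup (K j)))) = H :=
    le_antisymm hJle fun h hh => hmain _ h hh le_rfl
  have hcomm : ∀ s ∈ {s | ∃ a, s = cls H a}, ∀ t ∈ {s | ∃ a, s = cls H a}, s ≠ t →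
      ∀ x ∈ H ⊓ Subgroup.pi sᶜ (fun j => (⊥ : Subgroup (K j))),
        ∀ y ∈ H ⊓ Subgroup.pi tᶜ (fun j => (⊥ : Subgroup (K j))), Commute x y := by
    intro s hs t ht hst x hx y hy
    have hxy : x * y = y * x := by
      funext k
      simp only [Pi.mul_apply]
      by_cases hk : k ∈ s
      · have hyk : y k = 1 := by simpa using hy.2 k (hdisjP s hs t ht hst k hk)
        rw [hyk]; simp
      · have hxk : x k = 1 := by simpa using hx.2 k hk
        rw [hxk]; simp
    exact commute_iff_eq x y |>.mpr hxy
  have hbotinter : ∀ s ∈ {s | ∃ a, s = cls H a},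
      (H ⊓ Subgroup.pi sᶜ fun j => (⊥ : Subgroup (K j))) ⊓
        (⨆ t ∈ {s | ∃ a, s = cls H a}, ⨆ _ : t ≠ s,
          (H ⊓ Subgroup.pi tᶜ fun j => (⊥ : Subgroup (K j)))) = ⊥ := by
    intro s hs
    rw [eq_bot_iff]
    intro x hx
    have hsup : (⨆ t ∈ {s | ∃ a, s = cls H a}, ⨆ _ : t ≠ s,
        (H ⊓ Subgroup.pi tᶜ fun j => (⊥ : Subgroup (K j)))) ≤
        Subgroup.pi s fun j => (⊥ : Subgroup (K j)) := by
      refine iSup_le fun t => iSup_le fun ht => iSup_le fun hts => ?_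
      intro y hy
      rw [Subgroup.mem_pi]
      intro k hk
      have hkt : k ∉ t := hdisjP s hs t ht hts.symm k hk
      simpa using hy.2 k hkt
    have hx2 := hsup hx.2
    have hx1 : x = 1 := by
      funext k
      show x k = 1
      by_cases hk : k ∈ s
      · simpa using (Subgroup.mem_pi _).mp hx2 k hk
      · simpa using hx.1.2 k hk
    rw [hx1]; exact one_mem _
  have hbij : ∀ s ∈ {s | ∃ a, s = cls H a}, ∀ i ∈ s,
      Function.Bijective
        (fun x : ↥(H ⊓ Subgroup.pi sᶜ (fun j => (⊥ : Subgroup (K j)))) =>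
          Pi.evalMonoidHom K i (x : ∀ j, K j)) := by
    rintro s ⟨a, rfl⟩ i hi
    have hseq : cls H a = cls H i := (cls_eq_of_mem hi).symm
    rw [hseq]
    constructor
    · intro x y hxy
      have hx1 : ((x : ∀ j, K j)⁻¹ * (y : ∀ j, K j)) ∈
          H ⊓ Subgroup.pi (cls H i)ᶜ fun j => (⊥ : Subgroup (K j)) :=
        mul_mem (inv_mem x.2) y.2
      have hval : ((x : ∀ j, K j)⁻¹ * (y : ∀ j, K j)) i = 1 := by
        simp only [Pi.mul_apply, Pi.inv_apply]
        have : (x : ∀ j, K j) i = (y : ∀ j, K j) i := hxy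
        rw [this, inv_mul_cancel]
      have := diagInj i _ hx1 hval
      exact Subtype.ext (inv_mul_eq_one.mp this)
    · intro z
      have hz : z ∈ (H ⊓ Subgroup.pi (cls H i)ᶜ fun j => (⊥ : Subgroup (K j))).map
          (Pi.evalMonoidHom K i) := by rw [diagSurj i]; trivial
      rw [Subgroup.mem_map] at hz
      obtain ⟨g, hg, hgz⟩ := hz
      exact ⟨⟨g, hg⟩, hgz⟩
  refine ⟨{s | ∃ a, s = cls H a}, ⟨hpart, hcomm, hjoin, hbotinter, hbij⟩, ?_⟩
  rintro Q ⟨hQpart, hQcomm, hQjoin, hQbot, hQdiag⟩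
  have hQdisj : ∀ q ∈ Q, ∀ q' ∈ Q, q ≠ q' → ∀ k, k ∈ q → k ∉ q' := by
    intro q hq q' hq' hne k hk hk'
    obtain ⟨b, _, hbu⟩ := hQpart.2 k
    exact hne ((hbu q ⟨hq, hk⟩).trans (hbu q' ⟨hq', hk'⟩).symm)
  have u1 : ∀ h ∈ H, ∀ q ∈ Q,
      (fun k => if k ∈ q then h k else 1) ∈
        H ⊓ Subgroup.pi qᶜ fun j => (⊥ : Subgroup (K j)) := by
    intro h hh
    have hh' : h ∈ ⨆ q ∈ Q, (H ⊓ Subgroup.pi qᶜ fun j => (⊥ : Subgroup (K j))) := by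
      rw [hQjoin]; exact hh
    refine Subgroup.iSup_induction
      (fun q => ⨆ _ : q ∈ Q, (H ⊓ Subgroup.pi qᶜ fun j => (⊥ : Subgroup (K j))))
      (C := fun x => ∀ q ∈ Q, (fun k => if k ∈ q then x k else 1) ∈
        H ⊓ Subgroup.pi qᶜ fun j => (⊥ : Subgroup (K j)))
      hh' ?_ ?_ ?_
    · intro t x hx q hq
      by_cases ht : t ∈ Q
      · simp only [iSup_pos ht] at hx
        by_cases hqt : q = t
        · subst hqt
          have hxx : (fun k => if k ∈ q then x k else 1) = x := by
            funext k
            by_cases hk : k ∈ q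
            · simp [hk]
            · rw [if_neg hk]
              have hxk : x k = 1 := by simpa using hx.2 k hk
              exact hxk.symm
          rw [hxx]; exact hx
        · have hxx : (fun k => if k ∈ q then x k else 1) = (1 : ∀ j, K j) := by
            funext k
            show _ = 1
            by_cases hk : k ∈ q
            · rw [if_pos hk]
              have hkt : k ∉ t := hQdisj q hq t ht hqt k hk
              simpa using hx.2 k hkt
            · rw [if_neg hk]
          rw [hxx]; exact one_mem _
      · simp only [iSup_neg ht] at hx
        have hx1 : x = 1 := by simpa using hx
        subst hx1
        have hxx : (fun k => if k ∈ q then (1 : ∀ j, K j) k else 1) = (1 : ∀ j, K j) := by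
          funext k; show _ = 1; split <;> simp
        rw [hxx]; exact one_mem _
    · intro q hq
      have hxx : (fun k => if k ∈ q then (1 : ∀ j, K j) k else 1) = (1 : ∀ j, K j) := by
        funext k; show _ = 1; split <;> simp
      rw [hxx]; exact one_mem _
    · intro x y hx hy q hq
      have hxx : (fun k => if k ∈ q then (x * y) k else 1) =
          (fun k => if k ∈ q then x k else 1) * (fun k => if k ∈ q then y k else 1) := by
        funext k
        by_cases hk : k ∈ q <;> simp [hk]
      rw [hxx]; exact mul_mem (hx q hq) (hy q hq)
  have u2 : ∀ q ∈ Q, ∀ i ∈ q, ∀ j ∈ q, Rel H i j := by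
    intro q hq i hi j hj h hh hhj
    have hp := u1 h hh q hq
    have hinj := (hQdiag q hq j hj).1
    have heq : (⟨_, hp⟩ : ↥(H ⊓ Subgroup.pi qᶜ fun l => (⊥ : Subgroup (K l)))) = 1 := by
      apply hinj
      show (if j ∈ q then h j else 1) = Pi.evalMonoidHom K j
        ((1 : ↥(H ⊓ Subgroup.pi qᶜ fun l => (⊥ : Subgroup (K l)))) : ∀ l, K l)
      rw [if_pos hj, hhj]
      rfl
    have hval := congrArg (fun z : ↥(H ⊓ Subgroup.pi qᶜ fun l => (⊥ : Subgroup (K l))) =>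
      (z : ∀ l, K l) i) heq
    simpa [hi] using hval
  have u3 : ∀ q ∈ Q, ∀ i ∈ q, q = cls H i := by
    intro q hq i hi
    ext j
    constructor
    · intro hj
      exact u2 q hq j hj i hi
    · intro hj
      obtain ⟨q', ⟨hq', hjq'⟩, _⟩ := hQpart.2 j
      by_cases he : q' = q
      · exact he ▸ hjq'
      · exfalso
        have hnt : ∃ x0 : K j, x0 ≠ 1 := by
          by_contra hc
          push_neg at hc
          exact hna j fun x y => by rw [hc x, hc y]
        obtain ⟨x0, hx0⟩ := hnt
        obtain ⟨⟨g, hg⟩, hgval⟩ := (hQdiag q' hq' j hjq').2 x0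
        have hgi : g i = 1 := by
          have hig : i ∉ q' := hQdisj q hq q' hq' (Ne.symm he) i hi
          simpa using hg.2 i hig
        have hgj : g j = 1 := hj g hg.1 hgi
        have hgval' : g j = x0 := hgval
        exact hx0 (hgval' ▸ hgj)
  ext s
  constructor
  · intro hs
    obtain ⟨i, hi⟩ : s.Nonempty :=
      Set.nonempty_iff_ne_empty.mpr fun he => hQpart.1 (he ▸ hs)
    rw [u3 s hs i hi]
    exact hPmem i
  · rintro ⟨a, rfl⟩
    obtain ⟨q, ⟨hq, haq⟩, _⟩ := hQpart.2 a
    have hqa := u3 q hq a haq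
    rw [← hqa]
    exact hq
end

section
/- Let G = K₁ × ⋯ × K_n be a direct product of nonabelian simple groups K₁, …, K_n with projections π_i : G → K_i, and let H be an overdiagonal subgroup of G. Then H is self-normalizing in G: N_G(H) = H. -/
universe u

private def restMap {n : ℕ} (K : Fin (n + 1) → Type u) [∀ i, Group (K i)] :
    (∀ i, K i) →* (∀ i : Fin n, K i.succ) where
  toFun x i := x i.succ
  map_one' := rfl
  map_mul' _ _ := rfl

private theorem aux_overdiag : ∀ (n : ℕ) (K : Fin n → Type u) [∀ i, Group (K i)]
    [∀ i, IsSimpleGroup (K i)],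
    (∀ i, ¬ ∀ x y : K i, Commute x y) → ∀ (H : Subgroup (∀ i, K i)),
    (∀ i, H.map (Pi.evalMonoidHom K i) = ⊤) → Subgroup.normalizer (H : Set (∀ i, K i)) ≤ H := by
  intro n
  induction n with
  | zero =>
    intro K _ _ hna H hover g hg
    have : g = 1 := funext fun i => Fin.elim0 i
    rw [this]; exact one_mem H
  | succ n ih =>
    intro K _ _ hna H hover g hg
    set f := restMap K with hf
    set H' := H.map f with hH'
    have hover' : ∀ i : Fin n,
        H'.map (Pi.evalMonoidHom (fun j : Fin n => K j.succ) i) = ⊤ := by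
      intro i
      rw [hH', Subgroup.map_map]
      exact hover i.succ
    have hgnorm := Subgroup.mem_normalizer_iff.mp hg
    have hg' : f g ∈ Subgroup.normalizer (H' : Set (∀ i : Fin n, K i.succ)) := by
      rw [Subgroup.mem_normalizer_iff]
      intro h'
      constructor
      · rintro ⟨h, hh, rfl⟩
        exact ⟨g * h * g⁻¹, (hgnorm h).mp hh, by simp [map_mul, map_inv]⟩
      · rintro ⟨x, hx, hxe⟩
        have hxH : x ∈ H := hx
        have hx' : g⁻¹ * x * g ∈ H := by
          apply (hgnorm (g⁻¹ * x * g)).mpr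
          group
          simpa using hxH
        refine ⟨g⁻¹ * x * g, hx', ?_⟩
        have heq : h' = (f g)⁻¹ * (f x) * (f g) := by
          rw [hxe]; group
        rw [heq]; simp [map_mul, map_inv]
    have hgH' : f g ∈ H' :=
      ih (fun i => K i.succ) (fun i => hna i.succ) H' hover' hg'
    obtain ⟨h, hh', hfh⟩ := hgH'
    have hh : h ∈ H := hh'
    set u := g * h⁻¹ with hu
    have hu_rest : f u = 1 := by
      rw [hu, map_mul, map_inv, hfh, mul_inv_cancel]
    have hu_norm : u ∈ Subgroup.normalizer (H : Set (∀ i, K i)) :=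
      mul_mem hg (inv_mem (Subgroup.le_normalizer (H := H) hh))
    have hunorm := Subgroup.mem_normalizer_iff.mp hu_norm
    set N : Subgroup (K 0) := (H ⊓ f.ker).map (Pi.evalMonoidHom K 0) with hN
    have hNnormal : N.Normal := by
      constructor
      rintro a ⟨x, hx, rfl⟩ k
      obtain ⟨hxH, hxk⟩ := Subgroup.mem_inf.mp hx
      have hk : k ∈ H.map (Pi.evalMonoidHom K 0) := by rw [hover 0]; trivial
      obtain ⟨h₀, hh₀', rfl⟩ := hk
      have hh₀ : h₀ ∈ H := hh₀'
      refine ⟨h₀ * x * h₀⁻¹, Subgroup.mem_inf.mpr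
        ⟨mul_mem (mul_mem hh₀ hxH) (inv_mem hh₀), ?_⟩, rfl⟩
      have hfx : f x = 1 := MonoidHom.mem_ker.mp hxk
      rw [MonoidHom.mem_ker, map_mul, map_mul, map_inv, hfx, mul_one,
        mul_inv_cancel]
    rcases hNnormal.eq_bot_or_eq_top with hbot | htop
    · -- N = ⊥ : u 0 is central, hence trivial, so u = 1 and g = h
      have hcen : ∀ k : K 0, k * u 0 = u 0 * k := by
        intro k
        have hk : k ∈ H.map (Pi.evalMonoidHom K 0) := by rw [hover 0]; trivial
        obtain ⟨h₀, hh₀', rfl⟩ := hk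
        have hh₀ : h₀ ∈ H := hh₀'
        set y := u * h₀ * u⁻¹ * h₀⁻¹ with hy
        have hyH : y ∈ H :=
          mul_mem ((hunorm h₀).mp hh₀) (inv_mem hh₀)
        have hyk : y ∈ f.ker := by
          rw [MonoidHom.mem_ker, hy, map_mul, map_mul, map_mul, map_inv,
            map_inv, hu_rest]
          group
        have hyN : y 0 ∈ N := ⟨y, Subgroup.mem_inf.mpr ⟨hyH, hyk⟩, rfl⟩
        rw [hbot, Subgroup.mem_bot] at hyN
        have h1 : u 0 * h₀ 0 * (u 0)⁻¹ * (h₀ 0)⁻¹ = 1 := hyN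
        have h2 : u 0 * h₀ 0 * (u 0)⁻¹ = h₀ 0 := by
          rwa [mul_inv_eq_one] at h1
        calc h₀ 0 * u 0 = (u 0 * h₀ 0 * (u 0)⁻¹) * u 0 := by rw [h2]
          _ = u 0 * h₀ 0 := by group
      have hcenter : u 0 ∈ Subgroup.center (K 0) :=
        Subgroup.mem_center_iff.mpr hcen
      have hZ : Subgroup.center (K 0) = ⊥ := by
        rcases (inferInstance : (Subgroup.center (K 0)).Normal).eq_bot_or_eq_top
          with h1 | h1
        · exact h1
        · exfalso
          apply hna 0
          intro x y
          have : x ∈ Subgroup.center (K 0) := by rw [h1]; trivial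
          exact (Subgroup.mem_center_iff.mp this y).symm
      rw [hZ, Subgroup.mem_bot] at hcenter
      have hu1 : u = 1 := by
        funext i
        refine Fin.cases ?_ ?_ i
        · exact hcenter
        · intro j
          exact congrFun hu_rest j
      have hgh : g = h := by
        have h3 : g * h⁻¹ = 1 := hu.symm.trans hu1
        rwa [mul_inv_eq_one] at h3
      rw [hgh]; exact hh
    · -- N = ⊤ : H contains the first factor, so u ∈ H
      have hmem : u 0 ∈ N := by rw [htop]; trivial
      obtain ⟨x, hx, hx0⟩ := hmem
      obtain ⟨hxH, hxk⟩ := Subgroup.mem_inf.mp hx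
      have hxu : x = u := by
        funext i
        refine Fin.cases ?_ ?_ i
        · exact hx0
        · intro j
          have h1 : x j.succ = 1 := congrFun (MonoidHom.mem_ker.mp hxk) j
          have h2 : u j.succ = 1 := congrFun hu_rest j
          rw [h1, h2]
      have huH : u ∈ H := hxu ▸ hxH
      have hgu : g = u * h := by rw [hu]; group
      rw [hgu]; exact mul_mem huH hh

/-- Let `G = K₁ × ⋯ × K_n` be a direct product of nonabelian simple
groups with projections `π i`, and let `H` be an overdiagonal subgroup of `G`
(i.e. `π i (H) = K i` for every `i`).  Then `H` is self-normalizing: `N_G(H) = H`. -/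
theorem overdiagonal_self_normalizing
    {n : ℕ} (K : Fin n → Type*) [∀ i, Group (K i)] [∀ i, Finite (K i)]
    [∀ i, IsSimpleGroup (K i)] (hna : ∀ i, ¬ ∀ x y : K i, Commute x y)
    (H : Subgroup (∀ i, K i))
    (hover : ∀ i, H.map (Pi.evalMonoidHom K i) = ⊤) :
    Subgroup.normalizer (H : Set (∀ i, K i)) = H :=
  le_antisymm (aux_overdiag n K hna H hover) (Subgroup.le_normalizer (H := H))
end

section
/- Let G be a finite group and let K be a sol-component of G. Then K is either constrained or semisimple; that is, either E(K) = 1 or E(K) = K. -/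
open Pointwise

open scoped commutatorElement

section Aux

variable {G₁ : Type*} [Group G₁] {G₂ : Type*} [Group G₂]

lemma IsSubnormal.mapHom {H : Subgroup G₁} (h : IsSubnormal H) (f : G₁ →* G₂)
    (hf : Function.Surjective f) : IsSubnormal (H.map f) := by
  obtain ⟨n, c, h0, hn, hstep⟩ := h
  refine ⟨n, fun i => (c i).map f, congrArg (Subgroup.map f) h0,
    (congrArg (Subgroup.map f) hn).trans (Subgroup.map_top_of_surjective f hf), ?_⟩
  intro i hi
  obtain ⟨hle, hnorm⟩ := hstep i hi
  refine ⟨Subgroup.map_mono hle, ?_⟩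
  rw [Subgroup.normal_subgroupOf_iff (Subgroup.map_mono hle)]
  rintro h' k' ⟨a, ha, rfl⟩ ⟨b, hb, rfl⟩
  have key := (Subgroup.normal_subgroupOf_iff hle).mp hnorm a b ha hb
  exact Subgroup.mem_map.mpr ⟨b * a * b⁻¹, key, by simp [map_mul]⟩

lemma IsSubnormal.eq_bot_or_eq_top' [IsSimpleGroup G₁] {H : Subgroup G₁}
    (h : IsSubnormal H) : H = ⊥ ∨ H = ⊤ := by
  obtain ⟨n, c, h0, hn, hstep⟩ := h
  have key : ∀ j, c (n - j) = ⊥ ∨ c (n - j) = ⊤ := by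
    intro j
    induction j with
    | zero => rw [Nat.sub_zero, hn]; exact Or.inr rfl
    | succ j ih =>
      by_cases hj : n ≤ j
      · have e1 : n - j = 0 := Nat.sub_eq_zero_of_le hj
        have e2 : n - (j + 1) = 0 := Nat.sub_eq_zero_of_le (hj.trans (Nat.le_succ j))
        rw [e2, ← e1]; exact ih
      · push_neg at hj
        have harith : n - (j + 1) + 1 = n - j := by omega
        have hlt : n - (j + 1) < n := by omega
        obtain ⟨hle, hnorm⟩ := hstep (n - (j + 1)) hlt
        rw [harith] at hle hnorm
        rcases ih with hbot | htop
        · left; rw [hbot] at hle; exact le_bot_iff.mp hle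
        · rw [htop] at hle hnorm
          have hN : (c (n - (j + 1))).Normal := by
            constructor
            intro a ha g
            exact (Subgroup.normal_subgroupOf_iff le_top).mp hnorm a g ha (Subgroup.mem_top g)
          exact hN.eq_bot_or_eq_top
  have := key n
  rwa [Nat.sub_self, h0] at this

lemma perfect_of_surjective_s9 (f : G₁ →* G₂) (hf : Function.Surjective f)
    (h : commutator G₁ = ⊤) : commutator G₂ = ⊤ := by
  rw [commutator_def, ← Subgroup.map_top_of_surjective f hf, ← Subgroup.map_commutator,
    ← commutator_def, h, Subgroup.map_top_of_surjective f hf]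

lemma eq_one_of_perfect_of_solvable (h : commutator G₁ = ⊤) [hs : Group.IsSolvable G₁]
    (x : G₁) : x = 1 := by
  have key : ∀ n, derivedSeries G₁ n = ⊤ := by
    intro n
    induction n with
    | zero => exact derivedSeries_zero G₁
    | succ n ih => rw [derivedSeries_succ, ih, ← commutator_def, h]
  obtain ⟨n, hn⟩ := hs.solvable
  rw [key n] at hn
  have : x ∈ (⊥ : Subgroup G₁) := hn ▸ Subgroup.mem_top x
  exact Subgroup.mem_bot.mp this

lemma center_map_equiv (e : G₁ ≃* G₂) :
    (Subgroup.center G₁).map e.toMonoidHom = Subgroup.center G₂ := by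
  ext b
  simp only [Subgroup.mem_map]
  constructor
  · rintro ⟨a, ha, rfl⟩
    rw [Subgroup.mem_center_iff]
    intro g
    have h1 := Subgroup.mem_center_iff.mp ha (e.symm g)
    have hg : g = e (e.symm g) := (e.apply_symm_apply g).symm
    calc g * e.toMonoidHom a = e (e.symm g) * e a := by rw [← hg]; rfl
      _ = e (e.symm g * a) := by rw [map_mul]
      _ = e (a * e.symm g) := by rw [h1]
      _ = e a * e (e.symm g) := by rw [map_mul]
      _ = e.toMonoidHom a * g := by rw [← hg]; rfl
  · intro hb
    refine ⟨e.symm b, ?_, e.apply_symm_apply b⟩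
    rw [Subgroup.mem_center_iff]
    intro g
    apply e.injective
    have h1 := Subgroup.mem_center_iff.mp hb (e g)
    rw [map_mul, map_mul, e.apply_symm_apply, h1]

lemma IsQuasisimpleGroup.congr (e : G₁ ≃* G₂) (h : IsQuasisimpleGroup G₁) :
    IsQuasisimpleGroup G₂ := by
  obtain ⟨hperf, hsimple⟩ := h
  refine ⟨perfect_of_surjective_s9 e.toMonoidHom e.surjective hperf, ?_⟩
  have e' : (G₁ ⧸ Subgroup.center G₁) ≃* (G₂ ⧸ Subgroup.center G₂) :=
    QuotientGroup.congr _ _ e (center_map_equiv e)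
  haveI := hsimple
  haveI : Nontrivial (G₂ ⧸ Subgroup.center G₂) := e'.symm.toEquiv.nontrivial
  exact IsSimpleGroup.isSimpleGroup_of_surjective e'.toMonoidHom e'.surjective

lemma IsComponent.map_equiv {K : Subgroup G₁} (h : IsComponent K) (e : G₁ ≃* G₂) :
    IsComponent (K.map e.toMonoidHom) :=
  ⟨h.1.mapHom e.toMonoidHom e.surjective,
    IsQuasisimpleGroup.congr (K.equivMapOfInjective e.toMonoidHom e.injective) h.2⟩

instance layer_normal (G : Type*) [Group G] : (layer G).Normal := by
  constructor
  intro n hn g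
  have h : layer G ≤ (layer G).comap (MulAut.conj g).toMonoidHom := by
    apply sSup_le
    intro L hL x hx
    refine Subgroup.mem_comap.mpr ?_
    refine le_sSup (s := {K : Subgroup G | IsComponent K})
      (hL.map_equiv (MulAut.conj g)) ?_
    exact Subgroup.mem_map.mpr ⟨x, hx, rfl⟩
  simpa [MulAut.conj_apply] using h hn

lemma isSolvable_solRadical (G : Type*) [Group G] [Finite G] :
    Group.IsSolvable ↥(solRadical G) := by
  classical
  set S : Set (Subgroup G) := {N | N.Normal ∧ Group.IsSolvable ↥N} with hSdef
  have hbot : Group.IsSolvable ↥(⊥ : Subgroup G) := by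
    refine ⟨⟨0, ?_⟩⟩
    rw [derivedSeries_zero]
    ext x
    simp only [Subgroup.mem_top, true_iff]
    have hx1 : (x : G) = 1 := Subgroup.mem_bot.mp x.2
    exact Subgroup.mem_bot.mpr (Subtype.ext hx1)
  have hSne : S.Nonempty := ⟨⊥, inferInstance, hbot⟩
  have hjoin : ∀ N ∈ S, ∀ M ∈ S, N ⊔ M ∈ S := by
    rintro N ⟨hNnorm, hNsol⟩ M ⟨hMnorm, hMsol⟩
    haveI := hNnorm; haveI := hMnorm; haveI := hNsol; haveI := hMsol
    refine ⟨Subgroup.sup_normal N M, ?_⟩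
    have hmap : (N ⊔ M).map (QuotientGroup.mk' N) = M.map (QuotientGroup.mk' N) := by
      rw [Subgroup.map_sup]
      have hN0 : N.map (QuotientGroup.mk' N) = ⊥ := by
        rw [Subgroup.map_eq_bot_iff, QuotientGroup.ker_mk']
      rw [hN0, bot_sup_eq]
    haveI : Group.IsSolvable ↥(M.map (QuotientGroup.mk' N)) :=
      solvable_of_surjective ((QuotientGroup.mk' N).subgroupMap_surjective M)
    haveI : Group.IsSolvable ↥((N ⊔ M).map (QuotientGroup.mk' N)) := by rw [hmap]; infer_instance
    apply solvable_of_ker_le_range (Subgroup.inclusion (le_sup_left : N ≤ N ⊔ M))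
      ((QuotientGroup.mk' N).subgroupMap (N ⊔ M))
    intro x hx
    have hx1 : (QuotientGroup.mk' N) (x : G) = 1 := by
      have := Subtype.ext_iff.mp (MonoidHom.mem_ker.mp hx)
      simpa using this
    have hxN : (x : G) ∈ N := (QuotientGroup.eq_one_iff _).mp hx1
    exact ⟨⟨(x : G), hxN⟩, Subtype.ext rfl⟩
  have hSfin : S.Finite := Set.toFinite S
  obtain ⟨N₀, hN₀S, hmax⟩ := Set.Finite.exists_maximalFor id S hSfin hSne
  have hle : solRadical G ≤ N₀ := by
    apply sSup_le
    intro M hM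
    have h1 : N₀ ⊔ M ∈ S := hjoin N₀ hN₀S M hM
    have h2 : N₀ = N₀ ⊔ M := le_antisymm le_sup_left (hmax h1 le_sup_left)
    calc M ≤ N₀ ⊔ M := le_sup_right
      _ = N₀ := h2.symm
  have heq : solRadical G = N₀ := le_antisymm hle (le_sSup hN₀S)
  rw [heq]
  exact hN₀S.2

end Aux

/-- Every sol-component `K` of a finite group `G` is either
constrained (`E(K) = 1`) or semisimple (`E(K) = K`). -/
theorem solComponent_constrained_or_semisimple
    {G : Type*} [Group G] [Finite G] (K : Subgroup G) (hK : IsSolComponent K) :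
    layer ↥K = ⊥ ∨ layer ↥K = ⊤ := by
  classical
  by_cases hE : layer ↥K = ⊥
  · exact Or.inl hE
  right
  obtain ⟨hKsub, hKperf, hQcomp⟩ := hK
  obtain ⟨hQsub, hQperf, hQsimple⟩ := hQcomp
  set f := QuotientGroup.mk' (solRadical G) with hf
  set Q := K.map f with hQ
  set φ : ↥K →* ↥Q := f.subgroupMap K with hφdef
  have hφ : Function.Surjective φ := f.subgroupMap_surjective K
  haveI hsolrad : Group.IsSolvable ↥(solRadical G) := isSolvable_solRadical G
  have hker : ∀ x : ↥K, φ x = 1 ↔ (x : G) ∈ solRadical G := by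
    intro x
    rw [Subtype.ext_iff]
    have hco : ((φ x : ↥Q) : G ⧸ solRadical G) = f (x : G) := rfl
    rw [hco]
    exact QuotientGroup.eq_one_iff _
  haveI hkersol : Group.IsSolvable ↥φ.ker := by
    have hmem : ∀ x : ↥φ.ker, (K.subtype.comp φ.ker.subtype) x ∈ solRadical G := by
      intro x
      exact (hker x.1).mp x.2
    set j := (K.subtype.comp φ.ker.subtype).codRestrict (solRadical G) hmem with hj
    have hjinj : Function.Injective j := by
      intro a b hab
      apply Subtype.ext
      apply Subtype.ext
      have h1 := congrArg (fun y : ↥(solRadical G) => (y : G)) hab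
      simpa [j, MonoidHom.codRestrict_apply] using h1
    exact solvable_of_solvable_injective hjinj
  have hLex : ∃ L : Subgroup ↥K, IsComponent L ∧ L ≠ ⊥ := by
    by_contra hcon
    push_neg at hcon
    exact hE (le_bot_iff.mp (sSup_le fun L hL => (hcon L hL).le))
  obtain ⟨L, hLcomp, hLne⟩ := hLex
  have hLsub := hLcomp.1
  have hLperf : commutator ↥L = ⊤ := hLcomp.2.1
  set M : Subgroup ↥Q := L.map φ with hMdef
  have hMsub : IsSubnormal M := hLsub.mapHom φ hφ
  have hMperf : commutator ↥M = ⊤ :=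
    perfect_of_surjective_s9 (φ.subgroupMap L) (φ.subgroupMap_surjective L) hLperf
  set Z := Subgroup.center ↥Q with hZ
  set π := QuotientGroup.mk' Z with hπ
  have hM'sub : IsSubnormal (M.map π) := hMsub.mapHom π (QuotientGroup.mk'_surjective Z)
  haveI := hQsimple
  rcases hM'sub.eq_bot_or_eq_top' with hbot | htop
  · exfalso
    have hMZ : M ≤ Z := by
      intro x hx
      have h1 : π x ∈ M.map π := Subgroup.mem_map.mpr ⟨x, hx, rfl⟩
      rw [hbot] at h1
      have h2 : π x = 1 := Subgroup.mem_bot.mp h1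
      exact (QuotientGroup.eq_one_iff x).mp h2
    have hMbot : M = ⊥ := by
      have hcomm : ∀ a b : ↥M, a * b = b * a := by
        intro a b
        apply Subtype.ext
        push_cast
        exact (Subgroup.mem_center_iff.mp (hMZ a.2) (b : ↥Q)).symm
      have hle : (⊤ : Subgroup ↥M) ≤ ⊥ := by
        rw [← hMperf, commutator_def]
        apply Subgroup.commutator_le.mpr
        intro g _ h _
        rw [Subgroup.mem_bot]
        exact commutatorElement_eq_one_iff_commute.mpr (hcomm g h)
      refine (Subgroup.eq_bot_iff_forall _).mpr ?_
      intro x hx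
      have h1 : (⟨x, hx⟩ : ↥M) ∈ (⊥ : Subgroup ↥M) := hle (Subgroup.mem_top _)
      exact congrArg Subtype.val (Subgroup.mem_bot.mp h1)
    have hLker : L ≤ φ.ker := by
      intro x hx
      rw [MonoidHom.mem_ker]
      have h1 : φ x ∈ M := Subgroup.mem_map.mpr ⟨x, hx, rfl⟩
      rw [hMbot] at h1
      exact Subgroup.mem_bot.mp h1
    haveI : Group.IsSolvable ↥L := solvable_of_solvable_injective (Subgroup.inclusion_injective hLker)
    apply hLne
    refine (Subgroup.eq_bot_iff_forall _).mpr ?_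
    intro x hx
    exact congrArg Subtype.val (eq_one_of_perfect_of_solvable hLperf (⟨x, hx⟩ : ↥L))
  · -- M ⊔ Z = ⊤, hence M = ⊤, hence layer = ⊤
    have hMZtop : M ⊔ Z = ⊤ := by
      have h1 := congrArg (Subgroup.comap π) htop
      rwa [Subgroup.comap_map_eq, QuotientGroup.ker_mk', Subgroup.comap_top] at h1
    have hMtop : M = ⊤ := by
      rw [eq_top_iff, ← hQperf, commutator_def, ← hMZtop]
      apply Subgroup.commutator_le.mpr
      intro g hg h hh
      rw [← SetLike.mem_coe, Subgroup.mul_normal] at hg hh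
      obtain ⟨m, hm, z, hz, rfl⟩ := hg
      obtain ⟨m', hm', z', hz', rfl⟩ := hh
      have hzb : ∀ a : ↥Q, z * a = a * z := fun a => (Subgroup.mem_center_iff.mp hz a).symm
      have hz'b : ∀ a : ↥Q, z' * a = a * z' := fun a => (Subgroup.mem_center_iff.mp hz' a).symm
      have key1 : ⁅m * z, m' * z'⁆ = ⁅m, m' * z'⁆ := by
        rw [commutatorElement_def, commutatorElement_def]
        have h1 : (m * z) * (m' * z') * (m * z)⁻¹ * (m' * z')⁻¹
            = m * (z * (m' * z')) * z⁻¹ * m⁻¹ * (m' * z')⁻¹ := by group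
        rw [h1, hzb (m' * z')]
        group
      have key2 : ⁅m, m' * z'⁆ = ⁅m, m'⁆ := by
        rw [commutatorElement_def, commutatorElement_def]
        have h1 : m * (m' * z') * m⁻¹ * (m' * z')⁻¹
            = m * m' * (z' * m⁻¹) * z'⁻¹ * m'⁻¹ := by group
        rw [h1, hz'b m⁻¹]
        group
      rw [key1, key2, commutatorElement_def]
      exact mul_mem (mul_mem (mul_mem hm hm') (inv_mem hm)) (inv_mem hm')
    have hLle : L ≤ layer ↥K := le_sSup hLcomp
    haveI : (layer ↥K).Normal := layer_normal ↥K
    have hLsup : L ⊔ φ.ker = ⊤ := by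
      have h1 := congrArg (Subgroup.comap φ) hMtop
      rwa [Subgroup.comap_map_eq, Subgroup.comap_top] at h1
    set ρ := QuotientGroup.mk' (layer ↥K) with hρ
    have hρtop : Subgroup.map ρ φ.ker = ⊤ := by
      have h1 : Subgroup.map ρ (L ⊔ φ.ker) = ⊤ := by
        rw [hLsup]
        exact Subgroup.map_top_of_surjective ρ (QuotientGroup.mk'_surjective _)
      rw [Subgroup.map_sup] at h1
      have h2 : Subgroup.map ρ L = ⊥ := by
        rw [Subgroup.map_eq_bot_iff, QuotientGroup.ker_mk']
        exact hLle
      rwa [h2, bot_sup_eq] at h1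
    haveI : Group.IsSolvable (↥K ⧸ layer ↥K) := by
      apply solvable_of_surjective (f := ρ.comp φ.ker.subtype)
      rw [← MonoidHom.range_eq_top, MonoidHom.range_comp, Subgroup.range_subtype]
      exact hρtop
    have hperfQuot : commutator (↥K ⧸ layer ↥K) = ⊤ :=
      perfect_of_surjective_s9 ρ (QuotientGroup.mk'_surjective _) hKperf
    rw [eq_top_iff]
    intro x _
    have h1 : ρ x = 1 := eq_one_of_perfect_of_solvable hperfQuot (ρ x)
    have h2 : x ∈ ρ.ker := MonoidHom.mem_ker.mpr h1
    rwa [QuotientGroup.ker_mk'] at h2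
end
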